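/- arXiv:2504.14158 — 2 statements merged into one kernel-verified Lean document; each statement's English description precedes it below -/
import Mathlib

section
/- Let E be a CPTN super-operator on L(H) and define wp(Q) = E(E†(Q)) (eigenvalue-1 eigenspace of E†(Q)) for projectors Q. Then wp preserves finite meets: wp(P ∧ Q) = wp(P) ∧ wp(Q) for all projectors P, Q, where ∧ is subspace intersection. -/
open Matrix
open scoped ComplexOrder

noncomputable section

/-- Löwner order: `A ⊑ B` iff `B - A` is positive semidefinite. -/
def Loewner {d : Type*} [Fintype d] (A B : Matrix d d ℂ) : Prop :=
  (B - A).PosSemidef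

/-- An effect: a positive semidefinite operator bounded above by the identity. -/
def IsEffect {d : Type*} [Fintype d] [DecidableEq d] (M : Matrix d d ℂ) : Prop :=
  M.PosSemidef ∧ (1 - M).PosSemidef

/-- A (partial) density operator: positive semidefinite with trace at most 1. -/
def IsDensity {d : Type*} [Fintype d] (ρ : Matrix d d ℂ) : Prop :=
  ρ.PosSemidef ∧ ρ.trace.re ≤ 1

/-- An orthogonal projector: Hermitian idempotent. -/
def IsProj {d : Type*} [Fintype d] (P : Matrix d d ℂ) : Prop :=
  P.IsHermitian ∧ P * P = P

-- Demonic expectation: `inf_{M ∈ Θ} tr(M ρ)`, with the convention that the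
-- infimum over the empty set is `tr ρ`.
open Classical in
def demExp {d : Type*} [Fintype d] (Θ : Set (Matrix d d ℂ)) (ρ : Matrix d d ℂ) : ℝ :=
  if Θ = ∅ then ρ.trace.re else sInf ((fun M => (M * ρ).trace.re) '' Θ)

/-- Angelic expectation: `sup_{M ∈ Θ} tr(M ρ)`; note `sSup ∅ = 0` in `ℝ`,
matching the convention that the supremum over the empty set is `0`. -/
def angExp {d : Type*} [Fintype d] (Θ : Set (Matrix d d ℂ)) (ρ : Matrix d d ℂ) : ℝ :=
  sSup ((fun M => (M * ρ).trace.re) '' Θ)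

/-- The extension `I_{Fin m} ⊗ Φ` of a super-operator `Φ`, acting blockwise. -/
def tensorMap {n : ℕ} (Φ : Matrix (Fin n) (Fin n) ℂ → Matrix (Fin n) (Fin n) ℂ) (m : ℕ)
    (A : Matrix (Fin m × Fin n) (Fin m × Fin n) ℂ) :
    Matrix (Fin m × Fin n) (Fin m × Fin n) ℂ :=
  fun p q => Φ (Matrix.of fun a b => A (p.1, a) (q.1, b)) p.2 q.2

/-- Complete positivity: every extension `I_K ⊗ Φ` maps positive semidefinite
matrices to positive semidefinite matrices. -/
def IsCP {n : ℕ} (Φ : Matrix (Fin n) (Fin n) ℂ → Matrix (Fin n) (Fin n) ℂ) : Prop :=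
  ∀ (m : ℕ) (A : Matrix (Fin m × Fin n) (Fin m × Fin n) ℂ),
    A.PosSemidef → (tensorMap Φ m A).PosSemidef

/-- Trace-nonincreasing on positive operators. -/
def IsTNI {n : ℕ} (Φ : Matrix (Fin n) (Fin n) ℂ → Matrix (Fin n) (Fin n) ℂ) : Prop :=
  ∀ A : Matrix (Fin n) (Fin n) ℂ, A.PosSemidef → (Φ A).trace.re ≤ A.trace.re

/-- Trace-preserving on positive operators. -/
def IsTP {n : ℕ} (Φ : Matrix (Fin n) (Fin n) ℂ → Matrix (Fin n) (Fin n) ℂ) : Prop :=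
  ∀ A : Matrix (Fin n) (Fin n) ℂ, A.PosSemidef → (Φ A).trace = A.trace

/-- CPTN super-operator: linear, completely positive, and trace-nonincreasing. -/
def IsCPTN {n : ℕ} (Φ : Matrix (Fin n) (Fin n) ℂ → Matrix (Fin n) (Fin n) ℂ) : Prop :=
  IsLinearMap ℂ Φ ∧ IsCP Φ ∧ IsTNI Φ

/-- The Choi matrix `J(Φ) = (Φ ⊗ I)(Ω)` of `Φ`, where `Ω` is the maximally
entangled state on `H ⊗ H`. -/
def choi {n : ℕ} (Φ : Matrix (Fin n) (Fin n) ℂ → Matrix (Fin n) (Fin n) ℂ) :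
    Matrix (Fin n × Fin n) (Fin n × Fin n) ℂ :=
  fun p q => (1 / (n : ℂ)) * Φ (Matrix.single p.2 q.2 1) p.1 q.1



section SqrtCompat

open scoped MatrixOrder

variable {d : Type*} [Fintype d] [DecidableEq d]

def Matrix.PosSemidef.sqrt {A : Matrix d d ℂ} (_hA : A.PosSemidef) : Matrix d d ℂ :=
  CFC.sqrt A

lemma Matrix.PosSemidef.sqrt_mul_self {A : Matrix d d ℂ} (hA : A.PosSemidef) :
    hA.sqrt * hA.sqrt = A :=
  CFC.sqrt_mul_sqrt_self A hA.nonneg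

lemma Matrix.PosSemidef.posSemidef_sqrt {A : Matrix d d ℂ} (hA : A.PosSemidef) :
    hA.sqrt.PosSemidef :=
  (CFC.sqrt_nonneg A).posSemidef

lemma Matrix.posSemidef_iff_eq_transpose_mul_self {A : Matrix d d ℂ} :
    A.PosSemidef ↔ ∃ B : Matrix d d ℂ, A = Bᴴ * B :=
  ⟨fun h => CStarAlgebra.nonneg_iff_eq_star_mul_self.mp h.nonneg,
    fun ⟨B, hB⟩ => hB ▸ Matrix.posSemidef_conjTranspose_mul_self B⟩

end SqrtCompat

section WpHelpers

set_option linter.unusedSectionVars false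

variable {d : Type*} [Fintype d] [DecidableEq d]

lemma trace_vecMulVec_mul (x : d → ℂ) (A : Matrix d d ℂ) :
    (Matrix.vecMulVec x (star x) * A).trace = star x ⬝ᵥ A *ᵥ x := by
  simp only [Matrix.trace, Matrix.diag, Matrix.mul_apply, Matrix.vecMulVec_apply,
    dotProduct, Matrix.mulVec, Pi.star_apply]
  rw [Finset.sum_comm]
  congr 1; ext j
  rw [Finset.mul_sum]
  congr 1; ext i
  ring

lemma posSemidef_vecMulVec (x : d → ℂ) : (Matrix.vecMulVec x (star x)).PosSemidef := by
  have h := (Matrix.PosSemidef.one (n := Fin 1) (R := ℂ)).mul_mul_conjTranspose_same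
    (Matrix.replicateCol (Fin 1) x)
  rw [Matrix.mul_one] at h
  convert h using 1
  rw [Matrix.vecMulVec_eq (Fin 1)]
  congr 1

lemma psd_trace_nonneg {A : Matrix d d ℂ} (hA : A.PosSemidef) : 0 ≤ A.trace := by
  have h : ∀ i, 0 ≤ A i i := fun i => by
    have := hA.dotProduct_mulVec_nonneg (Pi.single i 1)
    simpa [Matrix.mulVec_single, dotProduct, Pi.single_apply, Finset.sum_ite_eq] using this
  exact Finset.sum_nonneg fun i _ => h i

lemma psd_trace_eq_zero {A : Matrix d d ℂ} (hA : A.PosSemidef) (h : A.trace = 0) : A = 0 := by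
  obtain ⟨B, rfl⟩ := Matrix.posSemidef_iff_eq_transpose_mul_self.mp hA
  suffices hB : B = 0 by rw [hB]; simp
  have hdiag : ∀ j, (Bᴴ * B) j j = 0 := by
    have hnn : ∀ j ∈ Finset.univ, (0:ℂ) ≤ (Bᴴ * B) j j := fun j _ => by
      simp only [Matrix.mul_apply, Matrix.conjTranspose_apply]
      exact Finset.sum_nonneg fun i _ => by
        simpa using star_mul_self_nonneg (B i j)
    intro j
    exact (Finset.sum_eq_zero_iff_of_nonneg hnn).mp h j (Finset.mem_univ j)
  ext i j
  have hj := hdiag j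
  simp only [Matrix.mul_apply, Matrix.conjTranspose_apply] at hj
  have : (fun i => B i j) = 0 := by
    rw [← dotProduct_star_self_eq_zero (v := fun i => B i j)]
    simpa [dotProduct] using hj
  simpa using congrFun this i

lemma traceMul_nonneg {A B : Matrix d d ℂ} (hA : A.PosSemidef) (hB : B.PosSemidef) :
    0 ≤ (A * B).trace := by
  have key : (A * B).trace = (hA.sqrt * B * hA.sqrt).trace := by
    conv_lhs => rw [← hA.sqrt_mul_self]
    rw [Matrix.mul_assoc, Matrix.trace_mul_comm, Matrix.mul_assoc]
  rw [key]
  refine psd_trace_nonneg ?_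
  have := hB.conjTranspose_mul_mul_same hA.sqrt
  rwa [hA.posSemidef_sqrt.1.eq] at this

lemma traceMul_eq_zero {A B : Matrix d d ℂ} (hA : A.PosSemidef) (hB : B.PosSemidef)
    (h : (A * B).trace = 0) : A * B = 0 := by
  have e : (A * B).trace = (hA.sqrt * B * hA.sqrt).trace := by
    conv_lhs => rw [← hA.sqrt_mul_self]
    rw [Matrix.mul_assoc, Matrix.trace_mul_comm, Matrix.mul_assoc]
  have key : (hA.sqrt * B * hA.sqrt).trace = 0 := by rw [← e, h]
  have hpsd : (hA.sqrt * B * hA.sqrt).PosSemidef := by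
    have := hB.conjTranspose_mul_mul_same hA.sqrt
    rwa [hA.posSemidef_sqrt.1.eq] at this
  have h0 : hA.sqrt * B * hA.sqrt = 0 := psd_trace_eq_zero hpsd key
  -- rewrite B = sqrtB * sqrtB
  have hBdec : B = hB.sqrt * hB.sqrt := hB.sqrt_mul_self.symm
  have h1 : (hB.sqrt * hA.sqrt)ᴴ * (hB.sqrt * hA.sqrt) = 0 := by
    rw [Matrix.conjTranspose_mul, hB.posSemidef_sqrt.1.eq, hA.posSemidef_sqrt.1.eq]
    calc hA.sqrt * hB.sqrt * (hB.sqrt * hA.sqrt)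
        = hA.sqrt * (hB.sqrt * hB.sqrt) * hA.sqrt := by noncomm_ring
      _ = 0 := by rw [hB.sqrt_mul_self, h0]
  have h2 : hB.sqrt * hA.sqrt = 0 := Matrix.conjTranspose_mul_self_eq_zero.mp h1
  have h3 : B * A = 0 := by
    calc B * A = hB.sqrt * hB.sqrt * (hA.sqrt * hA.sqrt) := by
          rw [hB.sqrt_mul_self, hA.sqrt_mul_self]
      _ = hB.sqrt * (hB.sqrt * hA.sqrt) * hA.sqrt := by noncomm_ring
      _ = 0 := by rw [h2]; simp
  calc A * B = (Bᴴ * Aᴴ)ᴴ := by simp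
    _ = (B * A)ᴴ := by rw [hB.1.eq, hA.1.eq]
    _ = 0 := by rw [h3]; simp

lemma ext_of_mulVec {A B : Matrix d d ℂ} (h : ∀ x, A *ᵥ x = B *ᵥ x) : A = B := by
  ext i j
  have := congrFun (h (Pi.single j 1)) i
  simpa [Matrix.mulVec_single] using this

lemma isHermitian_of_qf_nonneg {A : Matrix d d ℂ}
    (h : ∀ x, 0 ≤ star x ⬝ᵥ A *ᵥ x) : A.IsHermitian := by
  rw [Matrix.isHermitian_iff_isSymmetric, LinearMap.isSymmetric_iff_inner_map_self_real]
  intro v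
  obtain ⟨x, rfl⟩ : ∃ x : d → ℂ, v = WithLp.toLp 2 x := ⟨v.ofLp, rfl⟩
  rw [Matrix.toEuclideanLin_toLp, EuclideanSpace.inner_toLp_toLp, dotProduct_comm]
  have h1 : star (Matrix.toLin' A x) ⬝ᵥ x = star (star x ⬝ᵥ A *ᵥ x) := by
    simp only [Matrix.toLin'_apply, dotProduct, Pi.star_apply, star_sum, star_mul',
      star_star]
    congr 1; ext i; ring
  rw [h1]
  have h2 := h x
  have hre : (star x ⬝ᵥ A *ᵥ x).im = 0 := by
    have := (Complex.le_def.mp h2).2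
    simpa using this.symm
  simp [Complex.ext_iff, Complex.conj_re, Complex.conj_im, hre]

lemma posSemidef_of_qf {A : Matrix d d ℂ}
    (h : ∀ x, 0 ≤ star x ⬝ᵥ A *ᵥ x) : A.PosSemidef :=
  Matrix.PosSemidef.of_dotProduct_mulVec_nonneg (isHermitian_of_qf_nonneg h) h

end WpHelpers

theorem wp_preserves_meets {n : ℕ}
    (E E' : Matrix (Fin n) (Fin n) ℂ → Matrix (Fin n) (Fin n) ℂ)
    (hE : IsCPTN E) (hE'l : IsLinearMap ℂ E')
    (hadj : ∀ A B : Matrix (Fin n) (Fin n) ℂ, (E A * B).trace = (A * E' B).trace)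
    (P Q M : Matrix (Fin n) (Fin n) ℂ)
    (hP : IsProj P) (hQ : IsProj Q) (hM : IsProj M)
    -- `M` is the projector onto `P ∧ Q` (intersection of ranges)
    (hMc : ∀ v : Fin n → ℂ, M.mulVec v = v ↔ (P.mulVec v = v ∧ Q.mulVec v = v)) :
    {v : Fin n → ℂ | (E' M).mulVec v = v} =
      {v : Fin n → ℂ | (E' P).mulVec v = v} ∩ {v : Fin n → ℂ | (E' Q).mulVec v = v} := by
  obtain ⟨hElin, hECP, hETNI⟩ := hE
  have hEpos : ∀ A : Matrix (Fin n) (Fin n) ℂ, A.PosSemidef → (E A).PosSemidef := by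
    intro A hA
    have hB : (A.submatrix (Prod.snd : Fin 1 × Fin n → Fin n) Prod.snd).PosSemidef :=
      hA.submatrix _
    have hC := hECP 1 _ hB
    have hEA : E A = (tensorMap E 1 (A.submatrix Prod.snd Prod.snd)).submatrix
        (fun i => ((0 : Fin 1), i)) (fun i => ((0 : Fin 1), i)) := by
      ext i j; rfl
    rw [hEA]
    exact hC.submatrix _
  have key : ∀ (B : Matrix (Fin n) (Fin n) ℂ) (x : Fin n → ℂ),
      star x ⬝ᵥ (E' B) *ᵥ x = (E (Matrix.vecMulVec x (star x)) * B).trace := by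
    intro B x
    rw [hadj, trace_vecMulVec_mul]
  have projPSD : ∀ R : Matrix (Fin n) (Fin n) ℂ, IsProj R → R.PosSemidef := by
    intro R hR
    refine Matrix.posSemidef_iff_eq_transpose_mul_self.mpr ⟨R, ?_⟩
    rw [hR.1.eq, hR.2]
  have projCompl : ∀ R : Matrix (Fin n) (Fin n) ℂ, IsProj R → IsProj (1 - R) := by
    intro R hR
    refine ⟨Matrix.isHermitian_one.sub hR.1, ?_⟩
    rw [sub_mul, one_mul, mul_sub, mul_one, hR.2]
    abel
  have trace_xx : ∀ x : Fin n → ℂ, (Matrix.vecMulVec x (star x)).trace = star x ⬝ᵥ x := by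
    intro x
    simp [Matrix.trace, Matrix.diag, Matrix.vecMulVec_apply, dotProduct, mul_comm]
  have trace_le : ∀ x : Fin n → ℂ, (E (Matrix.vecMulVec x (star x))).trace ≤ star x ⬝ᵥ x := by
    intro x
    have h5 : 0 ≤ (E (Matrix.vecMulVec x (star x))).trace :=
      psd_trace_nonneg (hEpos _ (posSemidef_vecMulVec x))
    have h6 : (0:ℂ) ≤ star x ⬝ᵥ x := dotProduct_star_self_nonneg x
    have h7 := hETNI (Matrix.vecMulVec x (star x)) (posSemidef_vecMulVec x)
    rw [trace_xx x] at h7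
    rw [Complex.le_def]
    refine ⟨h7, ?_⟩
    have i1 := (Complex.le_def.mp h5).2
    have i2 := (Complex.le_def.mp h6).2
    simp only [Complex.zero_im] at i1 i2
    rw [← i1, ← i2]
  have effect : ∀ R : Matrix (Fin n) (Fin n) ℂ, IsProj R → (1 - E' R).PosSemidef := by
    intro R hR
    apply posSemidef_of_qf
    intro x
    have hρ : (E (Matrix.vecMulVec x (star x))).PosSemidef := hEpos _ (posSemidef_vecMulVec x)
    have h1 : 0 ≤ (E (Matrix.vecMulVec x (star x)) * (1 - R)).trace :=
      traceMul_nonneg hρ (projPSD _ (projCompl _ hR))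
    have h2 : (E (Matrix.vecMulVec x (star x)) * (1 - R)).trace =
        (E (Matrix.vecMulVec x (star x))).trace
          - (E (Matrix.vecMulVec x (star x)) * R).trace := by
      rw [mul_sub, mul_one, Matrix.trace_sub]
    have h3 : star x ⬝ᵥ (1 - E' R) *ᵥ x =
        star x ⬝ᵥ x - (E (Matrix.vecMulVec x (star x)) * R).trace := by
      rw [Matrix.sub_mulVec, dotProduct_sub, Matrix.one_mulVec, key]
    rw [h3, sub_nonneg]
    have h4 : (E (Matrix.vecMulVec x (star x)) * R).trace
        ≤ (E (Matrix.vecMulVec x (star x))).trace := by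
      rw [← sub_nonneg, ← h2]; exact h1
    exact h4.trans (trace_le x)
  have hE'sub : ∀ A B : Matrix (Fin n) (Fin n) ℂ, E' (A - B) = E' A - E' B := by
    intro A B
    have := (IsLinearMap.mk' E' hE'l).map_sub A B
    simpa using this
  ext v
  simp only [Set.mem_setOf_eq, Set.mem_inter_iff]
  constructor
  · intro hv
    have forward : ∀ R : Matrix (Fin n) (Fin n) ℂ, IsProj R → R * M = M →
        (E' R) *ᵥ v = v := by
      intro R hR hRM
      have hMR : M * R = M := by
        have h := congrArg Matrix.conjTranspose hRM
        rwa [Matrix.conjTranspose_mul, hR.1.eq, hM.1.eq] at h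
      have hRMproj : IsProj (R - M) := by
        refine ⟨hR.1.sub hM.1, ?_⟩
        rw [mul_sub, sub_mul, sub_mul, hR.2, hM.2, hRM, hMR]
        abel
      have hsub : (E' R - E' M).PosSemidef := by
        apply posSemidef_of_qf
        intro x
        rw [← hE'sub, key]
        exact traceMul_nonneg (hEpos _ (posSemidef_vecMulVec x)) (projPSD _ hRMproj)
      have h1 := effect R hR
      have e0 : star v ⬝ᵥ (1 - E' R) *ᵥ v + star v ⬝ᵥ (E' R - E' M) *ᵥ v = 0 := by
        simp only [Matrix.sub_mulVec, Matrix.one_mulVec, hv, dotProduct_sub]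
        ring
      have hz : star v ⬝ᵥ (1 - E' R) *ᵥ v = 0 :=
        ((add_eq_zero_iff_of_nonneg (h1.dotProduct_mulVec_nonneg v) (hsub.dotProduct_mulVec_nonneg v)).mp e0).1
      have hfix := (h1.dotProduct_mulVec_zero_iff v).mp hz
      rw [Matrix.sub_mulVec, Matrix.one_mulVec, sub_eq_zero] at hfix
      exact hfix.symm
    have hPM : P * M = M := by
      apply ext_of_mulVec
      intro x
      have hMM : M *ᵥ (M *ᵥ x) = M *ᵥ x := by rw [Matrix.mulVec_mulVec, hM.2]
      have := ((hMc (M *ᵥ x)).mp hMM).1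
      rw [← Matrix.mulVec_mulVec]
      exact this
    have hQM : Q * M = M := by
      apply ext_of_mulVec
      intro x
      have hMM : M *ᵥ (M *ᵥ x) = M *ᵥ x := by rw [Matrix.mulVec_mulVec, hM.2]
      have := ((hMc (M *ᵥ x)).mp hMM).2
      rw [← Matrix.mulVec_mulVec]
      exact this
    exact ⟨forward P hP hPM, forward Q hQ hQM⟩
  · rintro ⟨hp, hq⟩
    have hρ : (E (Matrix.vecMulVec v (star v))).PosSemidef :=
      hEpos _ (posSemidef_vecMulVec v)
    set ρ := E (Matrix.vecMulVec v (star v)) with hρdef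
    have trP : (ρ * P).trace = star v ⬝ᵥ v := by rw [← key P v, hp]
    have trQ : (ρ * Q).trace = star v ⬝ᵥ v := by rw [← key Q v, hq]
    have h2 : (ρ * (1 - P)).trace = ρ.trace - star v ⬝ᵥ v := by
      rw [mul_sub, mul_one, Matrix.trace_sub, trP]
    have h1 : 0 ≤ (ρ * (1 - P)).trace :=
      traceMul_nonneg hρ (projPSD _ (projCompl _ hP))
    have hle : (ρ * (1 - P)).trace ≤ 0 := by
      rw [h2, sub_nonpos]
      exact trace_le v
    have hz : (ρ * (1 - P)).trace = 0 := le_antisymm hle h1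
    have htrρ : ρ.trace = star v ⬝ᵥ v := by
      have := h2 ▸ hz
      exact sub_eq_zero.mp this
    have fixing : ∀ R : Matrix (Fin n) (Fin n) ℂ, IsProj R →
        (ρ * R).trace = star v ⬝ᵥ v → R * ρ = ρ := by
      intro R hR htr
      have hz' : ((1 - R) * ρ).trace = 0 := by
        rw [Matrix.trace_mul_comm, mul_sub, mul_one, Matrix.trace_sub, htr, htrρ, sub_self]
      have := traceMul_eq_zero (projPSD _ (projCompl _ hR)) hρ hz'
      rw [sub_mul, one_mul, sub_eq_zero] at this
      exact this.symm
    have hPρ : P * ρ = ρ := fixing P hP trP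
    have hQρ : Q * ρ = ρ := fixing Q hQ trQ
    have hMρ : M * ρ = ρ := by
      apply ext_of_mulVec
      intro x
      have hP' : P *ᵥ (ρ *ᵥ x) = ρ *ᵥ x := by rw [Matrix.mulVec_mulVec, hPρ]
      have hQ' : Q *ᵥ (ρ *ᵥ x) = ρ *ᵥ x := by rw [Matrix.mulVec_mulVec, hQρ]
      have := (hMc (ρ *ᵥ x)).mpr ⟨hP', hQ'⟩
      rw [← Matrix.mulVec_mulVec]
      exact this
    have trM : (ρ * M).trace = star v ⬝ᵥ v := by
      rw [Matrix.trace_mul_comm, hMρ, htrρ]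
    have hqf : star v ⬝ᵥ (1 - E' M) *ᵥ v = 0 := by
      rw [Matrix.sub_mulVec, dotProduct_sub, Matrix.one_mulVec, key, ← hρdef, trM, sub_self]
    have hfix := ((effect M hM).dotProduct_mulVec_zero_iff v).mp hqf
    rw [Matrix.sub_mulVec, Matrix.one_mulVec, sub_eq_zero] at hfix
    exact hfix.symm
end
end

section
/- Let 𝔼 and 𝔽 be nonempty, convex, closed sets of CPTN super-operators on L(H_V), H_V finite-dimensional. Define 𝔼 ≤_T^s 𝔽 iff for all sets of effects Θ, Ψ, Θ ≼_dem 𝔼†(Ψ) implies Θ ≼_dem 𝔽†(Ψ), where 𝔼†(Ψ) = {E†(N) : E ∈ 𝔼, N ∈ Ψ}. Then 𝔼 ≤_T^s 𝔽 if and only if 𝔼 ≤_S 𝔽 in the Smyth order induced by the complete-positivity order on super-operators (for every F ∈ 𝔽 there exists E ∈ 𝔼 with F − E completely positive). -/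
open Matrix
open scoped ComplexOrder

noncomputable section

namespace NTR
open Matrix Finset

variable {d : Type*} [Fintype d] [DecidableEq d]

lemma psd_eq_conjTranspose_mul_self {A : Matrix d d ℂ} (hA : A.PosSemidef) :
    ∃ B : Matrix d d ℂ, A = Bᴴ * B := by
  open scoped MatrixOrder in
  obtain ⟨B, hB⟩ := CStarAlgebra.nonneg_iff_eq_star_mul_self.mp hA.nonneg
  exact ⟨B, hB⟩

lemma trace_mul_eq (A B : Matrix d d ℂ) :
    (A * B).trace = ∑ p, ∑ q, A p q * B q p := by
  simp [Matrix.trace, Matrix.diag, Matrix.mul_apply]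

lemma psd_diag_nonneg {A : Matrix d d ℂ} (hA : A.PosSemidef) (i : d) : 0 ≤ A i i := by
  have h := hA.dotProduct_mulVec_nonneg (Pi.single i 1)
  simpa [Matrix.mulVec, dotProduct, Pi.single_apply] using h

lemma psd_trace_nonneg {A : Matrix d d ℂ} (hA : A.PosSemidef) : 0 ≤ A.trace :=
  Finset.sum_nonneg fun i _ => psd_diag_nonneg hA i

lemma psd_trace_re_nonneg {A : Matrix d d ℂ} (hA : A.PosSemidef) : 0 ≤ (A.trace).re :=
  (Complex.nonneg_iff.mp (psd_trace_nonneg hA)).1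

lemma psd_trace_im_zero {A : Matrix d d ℂ} (hA : A.PosSemidef) : (A.trace).im = 0 :=
  ((Complex.nonneg_iff.mp (psd_trace_nonneg hA)).2).symm

lemma trace_mul_psd_nonneg {A B : Matrix d d ℂ} (hA : A.PosSemidef) (hB : B.PosSemidef) :
    0 ≤ (A * B).trace := by
  obtain ⟨C, rfl⟩ := psd_eq_conjTranspose_mul_self hA
  rw [Matrix.mul_assoc, Matrix.trace_mul_comm]
  exact psd_trace_nonneg (hB.mul_mul_conjTranspose_same C)

lemma trace_mul_psd_re_nonneg {A B : Matrix d d ℂ} (hA : A.PosSemidef) (hB : B.PosSemidef) :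
    0 ≤ ((A * B).trace).re :=
  (Complex.nonneg_iff.mp (trace_mul_psd_nonneg hA hB)).1

def outer (x : d → ℂ) : Matrix d d ℂ :=
  Matrix.of fun p q => x p * (starRingEnd ℂ) (x q)

lemma outer_posSemidef (x : d → ℂ) : (outer x).PosSemidef := by
  refine Matrix.PosSemidef.of_dotProduct_mulVec_nonneg ?_ ?_
  · ext p q
    simp [outer, Matrix.conjTranspose_apply, mul_comm]
  · intro y
    have h : dotProduct (star y) ((outer x) *ᵥ y)
        = (∑ p, (starRingEnd ℂ) (y p) * x p) *
          (starRingEnd ℂ) (∑ p, (starRingEnd ℂ) (y p) * x p) := by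
      simp only [dotProduct, Matrix.mulVec, outer, Matrix.of_apply, Pi.star_apply,
        RCLike.star_def, map_sum, _root_.map_mul, Complex.conj_conj, Finset.mul_sum, Finset.sum_mul]
      rw [Finset.sum_comm]
      exact Finset.sum_congr rfl fun p _ => Finset.sum_congr rfl fun q _ => by ring
    rw [h, Complex.mul_conj]
    exact Complex.zero_le_real.mpr (Complex.normSq_nonneg _)

lemma quad_eq_trace_outer (A : Matrix d d ℂ) (x : d → ℂ) :
    dotProduct (star x) (A *ᵥ x) = (A * outer x).trace := by
  rw [trace_mul_eq]
  simp only [dotProduct, Matrix.mulVec, Pi.star_apply, outer, Matrix.of_apply,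
    RCLike.star_def, Finset.mul_sum]
  exact Finset.sum_congr rfl fun p _ => Finset.sum_congr rfl fun q _ => by ring

lemma conj_quad (A : Matrix d d ℂ) (x : d → ℂ) :
    (starRingEnd ℂ) (dotProduct (star x) (A *ᵥ x)) = dotProduct (star x) (Aᴴ *ᵥ x) := by
  simp only [dotProduct, Matrix.mulVec, map_sum, _root_.map_mul, Pi.star_apply, RCLike.star_def,
    Matrix.conjTranspose_apply, Complex.conj_conj, Finset.mul_sum]
  rw [Finset.sum_comm]
  exact Finset.sum_congr rfl fun p _ => Finset.sum_congr rfl fun q _ => by ring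

lemma hermitian_quad_im_zero {A : Matrix d d ℂ} (hA : A.IsHermitian) (x : d → ℂ) :
    (dotProduct (star x) (A *ᵥ x)).im = 0 := by
  have h := conj_quad A x
  rw [hA.eq] at h
  exact Complex.conj_eq_iff_im.mp h

lemma posSemidef_of_re {A : Matrix d d ℂ} (hA : A.IsHermitian)
    (h : ∀ x : d → ℂ, 0 ≤ (dotProduct (star x) (A *ᵥ x)).re) : A.PosSemidef :=
  Matrix.PosSemidef.of_dotProduct_mulVec_nonneg hA fun x => Complex.nonneg_iff.mpr ⟨h x, (hermitian_quad_im_zero hA x).symm⟩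

lemma psd_smul_real {A : Matrix d d ℂ} (hA : A.PosSemidef) {c : ℝ} (hc : 0 ≤ c) :
    (c • A).PosSemidef := by
  refine posSemidef_of_re ?_ fun x => ?_
  · show (c • A)ᴴ = c • A
    rw [Matrix.conjTranspose_smul, star_trivial, hA.1]
  · rw [Matrix.smul_mulVec, dotProduct_smul]
    have h0 := (Complex.nonneg_iff.mp (hA.dotProduct_mulVec_nonneg x)).1
    simpa [Complex.real_smul] using mul_nonneg hc h0

lemma psd_sum {ι : Type*} (s : Finset ι) (f : ι → Matrix d d ℂ)
    (hf : ∀ i ∈ s, (f i).PosSemidef) : (∑ i ∈ s, f i).PosSemidef := by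
  classical
  induction s using Finset.induction with
  | empty => simpa using Matrix.PosSemidef.zero
  | insert _ _ hx ih =>
    rw [Finset.sum_insert hx]
    exact ((hf _ (Finset.mem_insert_self _ _)).add
      (ih fun i hi => hf i (Finset.mem_insert_of_mem hi)))

lemma effect_trace_le {N σ : Matrix d d ℂ} (hN : IsEffect N) (hσ : σ.PosSemidef) :
    ((N * σ).trace).re ≤ (σ.trace).re := by
  have h := trace_mul_psd_re_nonneg hN.2 hσ
  rw [Matrix.sub_mul, Matrix.one_mul, Matrix.trace_sub] at h
  simp only [Complex.sub_re] at h
  linarith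

lemma psd_trace_smul_one_sub {A : Matrix d d ℂ} (hA : A.PosSemidef) :
    (A.trace • (1 : Matrix d d ℂ) - A).PosSemidef := by
  have hH := hA.1
  have hspec := hH.spectral_theorem
  simp only [Unitary.conjStarAlgAut_apply, Unitary.coe_star] at hspec
  set U : Matrix d d ℂ := (hH.eigenvectorUnitary : Matrix d d ℂ) with hU
  have hUU : U * star U = 1 := (Matrix.mem_unitaryGroup_iff).mp hH.eigenvectorUnitary.2
  have hUU' : star U * U = 1 := (Matrix.mem_unitaryGroup_iff').mp hH.eigenvectorUnitary.2
  have htr : A.trace = ((∑ i, hH.eigenvalues i : ℝ) : ℂ) := by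
    conv_lhs => rw [hspec]
    rw [Matrix.trace_mul_cycle, hUU', Matrix.one_mul, Matrix.trace_diagonal,
      Complex.ofReal_sum]
    rfl
  have h1 : A.trace • (1 : Matrix d d ℂ) - Matrix.diagonal (RCLike.ofReal ∘ hH.eigenvalues)
      = (Matrix.diagonal (fun i => A.trace - ((hH.eigenvalues i : ℝ) : ℂ))) := by
    ext i j
    by_cases h : i = j
    · subst h
      simp [Matrix.one_apply, Matrix.diagonal_apply, Function.comp]
    · simp [Matrix.one_apply_ne h, Matrix.diagonal_apply_ne _ h, h]
  have key : A.trace • (1 : Matrix d d ℂ) - A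
      = U * Matrix.diagonal (fun i => A.trace - ((hH.eigenvalues i : ℝ) : ℂ)) * star U := by
    rw [← h1, Matrix.mul_sub, Matrix.sub_mul, Matrix.mul_smul, Matrix.smul_mul,
      Matrix.mul_one, hUU, ← hspec]
  rw [key]
  have hdiagpsd : (Matrix.diagonal (fun i => A.trace - ((hH.eigenvalues i : ℝ) : ℂ))).PosSemidef := by
    refine Matrix.PosSemidef.diagonal fun i => ?_
    rw [htr, ← Complex.ofReal_sub]
    refine Complex.zero_le_real.mpr (sub_nonneg.mpr ?_)
    exact Finset.single_le_sum (fun j _ => hA.eigenvalues_nonneg j) (Finset.mem_univ i)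
  have := hdiagpsd.mul_mul_conjTranspose_same U
  rwa [← Matrix.star_eq_conjTranspose] at this

lemma trace_mul_le_trace_mul {A B : Matrix d d ℂ} (hA : A.PosSemidef) (hB : B.PosSemidef) :
    ((A * B).trace).re ≤ (A.trace).re * (B.trace).re := by
  have h := trace_mul_psd_re_nonneg hA (psd_trace_smul_one_sub hB)
  rw [Matrix.mul_sub, Matrix.trace_sub] at h
  have h2 : (A * (B.trace • (1 : Matrix d d ℂ))).trace = B.trace * A.trace := by
    rw [Matrix.mul_smul, Matrix.trace_smul, Matrix.mul_one, smul_eq_mul]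
  rw [h2] at h
  have hBim : (B.trace).im = 0 := psd_trace_im_zero hB
  have hAim : (A.trace).im = 0 := psd_trace_im_zero hA
  simp only [Complex.sub_re, Complex.mul_re, hBim, hAim] at h
  nlinarith [h]

/-! ### Blocks and tensorMap -/

def blk {m n : ℕ} (A : Matrix (Fin m × Fin n) (Fin m × Fin n) ℂ) (a b : Fin m) :
    Matrix (Fin n) (Fin n) ℂ :=
  Matrix.of fun i j => A (a, i) (b, j)

variable {n : ℕ}

lemma tensorMap_apply (Φ : Matrix (Fin n) (Fin n) ℂ → Matrix (Fin n) (Fin n) ℂ) (m : ℕ)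
    (A : Matrix (Fin m × Fin n) (Fin m × Fin n) ℂ) (p q : Fin m × Fin n) :
    tensorMap Φ m A p q = Φ (blk A p.1 q.1) p.2 q.2 := rfl

lemma blk_conjTranspose {m : ℕ} {A : Matrix (Fin m × Fin n) (Fin m × Fin n) ℂ}
    (hA : A.IsHermitian) (a b : Fin m) : blk A b a = (blk A a b)ᴴ := by
  ext i j
  have h := congrFun (congrFun hA (b, i)) (a, j)
  simpa [blk, Matrix.conjTranspose_apply] using h.symm

lemma blk_psd {m : ℕ} {A : Matrix (Fin m × Fin n) (Fin m × Fin n) ℂ}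
    (hA : A.PosSemidef) (a : Fin m) : (blk A a a).PosSemidef := by
  refine Matrix.PosSemidef.of_dotProduct_mulVec_nonneg (blk_conjTranspose hA.1 a a).symm fun y => ?_
  have h := hA.dotProduct_mulVec_nonneg (fun p : Fin m × Fin n => if p.1 = a then y p.2 else 0)
  have hx : dotProduct (star (fun p : Fin m × Fin n => if p.1 = a then y p.2 else 0))
      (A *ᵥ (fun p : Fin m × Fin n => if p.1 = a then y p.2 else 0))
      = dotProduct (star y) ((blk A a a) *ᵥ y) := by
    simp only [dotProduct, Matrix.mulVec, Fintype.sum_prod_type, Pi.star_apply, blk,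
      Matrix.of_apply, apply_ite, star_zero, ite_mul, mul_ite, zero_mul, mul_zero,
      Finset.sum_ite_eq', Finset.mem_univ, if_true, Finset.sum_ite_irrel, Finset.sum_const_zero]
  rw [← hx]
  exact h

lemma trace_tensorMap_mul (Φ : Matrix (Fin n) (Fin n) ℂ → Matrix (Fin n) (Fin n) ℂ) (m : ℕ)
    (X Y : Matrix (Fin m × Fin n) (Fin m × Fin n) ℂ) :
    (tensorMap Φ m X * Y).trace
      = ∑ a : Fin m, ∑ b : Fin m, (Φ (blk X a b) * blk Y b a).trace := by
  simp only [trace_mul_eq, Fintype.sum_prod_type, tensorMap, blk, Matrix.of_apply]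
  exact Finset.sum_congr rfl fun a _ => Finset.sum_comm

lemma trace_mul_tensorMap (Φ : Matrix (Fin n) (Fin n) ℂ → Matrix (Fin n) (Fin n) ℂ) (m : ℕ)
    (X Y : Matrix (Fin m × Fin n) (Fin m × Fin n) ℂ) :
    (X * tensorMap Φ m Y).trace
      = ∑ a : Fin m, ∑ b : Fin m, (blk X a b * Φ (blk Y b a)).trace := by
  simp only [trace_mul_eq, Fintype.sum_prod_type, tensorMap, blk, Matrix.of_apply]
  exact Finset.sum_congr rfl fun a _ => Finset.sum_comm

lemma adj_trace_tensor {G adjG : Matrix (Fin n) (Fin n) ℂ → Matrix (Fin n) (Fin n) ℂ}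
    (hG : ∀ A B : Matrix (Fin n) (Fin n) ℂ, (G A * B).trace = (A * adjG B).trace)
    (m : ℕ) (N ρ : Matrix (Fin m × Fin n) (Fin m × Fin n) ℂ) :
    (tensorMap adjG m N * ρ).trace = (N * tensorMap G m ρ).trace := by
  rw [trace_tensorMap_mul, trace_mul_tensorMap]
  refine Finset.sum_congr rfl fun a _ => Finset.sum_congr rfl fun b _ => ?_
  rw [Matrix.trace_mul_comm, ← hG, Matrix.trace_mul_comm]

lemma trace_eq_sum_blk {m : ℕ} (A : Matrix (Fin m × Fin n) (Fin m × Fin n) ℂ) :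
    A.trace = ∑ a : Fin m, (blk A a a).trace := by
  simp [Matrix.trace, Matrix.diag, blk, Fintype.sum_prod_type]

lemma trace_tensorMap (Φ : Matrix (Fin n) (Fin n) ℂ → Matrix (Fin n) (Fin n) ℂ) {m : ℕ}
    (A : Matrix (Fin m × Fin n) (Fin m × Fin n) ℂ) :
    (tensorMap Φ m A).trace = ∑ a : Fin m, (Φ (blk A a a)).trace := by
  simp [Matrix.trace, Matrix.diag, tensorMap, blk, Fintype.sum_prod_type]

lemma tensorMap_sub (F E : Matrix (Fin n) (Fin n) ℂ → Matrix (Fin n) (Fin n) ℂ) (m : ℕ)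
    (A : Matrix (Fin m × Fin n) (Fin m × Fin n) ℂ) :
    tensorMap (F - E) m A = tensorMap F m A - tensorMap E m A := rfl

lemma tensorMap_tni {Φ : Matrix (Fin n) (Fin n) ℂ → Matrix (Fin n) (Fin n) ℂ}
    (hΦ : IsTNI Φ) {m : ℕ} {A : Matrix (Fin m × Fin n) (Fin m × Fin n) ℂ}
    (hA : A.PosSemidef) : ((tensorMap Φ m A).trace).re ≤ (A.trace).re := by
  rw [trace_tensorMap, trace_eq_sum_blk A, Complex.re_sum, Complex.re_sum]
  exact Finset.sum_le_sum fun a _ => hΦ _ (blk_psd hA a)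

lemma tensorMap_isHermitian {Φ : Matrix (Fin n) (Fin n) ℂ → Matrix (Fin n) (Fin n) ℂ}
    (hΦ : ∀ X : Matrix (Fin n) (Fin n) ℂ, Φ (Xᴴ) = (Φ X)ᴴ)
    {m : ℕ} {A : Matrix (Fin m × Fin n) (Fin m × Fin n) ℂ} (hA : A.IsHermitian) :
    (tensorMap Φ m A).IsHermitian := by
  show (tensorMap Φ m A)ᴴ = tensorMap Φ m A
  ext p q
  rw [Matrix.conjTranspose_apply, tensorMap_apply, tensorMap_apply,
    blk_conjTranspose hA p.1 q.1, hΦ, Matrix.conjTranspose_apply, star_star]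

/-! ### Adjoints -/

lemma trace_stdBasis_mul (M : Matrix (Fin n) (Fin n) ℂ) (p q : Fin n) :
    (Matrix.single q p 1 * M).trace = M p q := by
  rw [trace_mul_eq]
  simp [Matrix.single, Matrix.of_apply, ite_and, ite_mul, one_mul, zero_mul,
    Finset.sum_ite_eq]

lemma stdBasis_conjTranspose (p q : Fin n) :
    (Matrix.single p q (1:ℂ))ᴴ = Matrix.single q p 1 := by
  ext i j
  simp [Matrix.single, Matrix.conjTranspose_apply, and_comm, apply_ite]

lemma adj_apply {G adjG : Matrix (Fin n) (Fin n) ℂ → Matrix (Fin n) (Fin n) ℂ}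
    (hG : ∀ A B : Matrix (Fin n) (Fin n) ℂ, (G A * B).trace = (A * adjG B).trace)
    (B : Matrix (Fin n) (Fin n) ℂ) (p q : Fin n) :
    adjG B p q = (G (Matrix.single q p 1) * B).trace := by
  rw [hG, trace_stdBasis_mul]

lemma adj_conjTranspose {G adjG : Matrix (Fin n) (Fin n) ℂ → Matrix (Fin n) (Fin n) ℂ}
    (hG : ∀ A B : Matrix (Fin n) (Fin n) ℂ, (G A * B).trace = (A * adjG B).trace)
    (hGc : ∀ X : Matrix (Fin n) (Fin n) ℂ, G (Xᴴ) = (G X)ᴴ)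
    (X : Matrix (Fin n) (Fin n) ℂ) : adjG (Xᴴ) = (adjG X)ᴴ := by
  ext p q
  rw [Matrix.conjTranspose_apply, adj_apply hG, adj_apply hG]
  have h1 : (G (Matrix.single p q 1) * X)ᴴ = Xᴴ * G (Matrix.single q p 1) := by
    rw [Matrix.conjTranspose_mul, ← hGc, stdBasis_conjTranspose]
  calc (G (Matrix.single q p 1) * Xᴴ).trace
      = (Xᴴ * G (Matrix.single q p 1)).trace := Matrix.trace_mul_comm _ _
    _ = ((G (Matrix.single p q 1) * X)ᴴ).trace := by rw [h1]
    _ = star ((G (Matrix.single p q 1) * X).trace) := Matrix.trace_conjTranspose _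

lemma isEffect_tensorMap_adj {G adjG : Matrix (Fin n) (Fin n) ℂ → Matrix (Fin n) (Fin n) ℂ}
    (hcp : IsCP G) (htni : IsTNI G)
    (hG : ∀ A B : Matrix (Fin n) (Fin n) ℂ, (G A * B).trace = (A * adjG B).trace)
    (hac : ∀ X : Matrix (Fin n) (Fin n) ℂ, adjG (Xᴴ) = (adjG X)ᴴ)
    {m : ℕ} {N : Matrix (Fin m × Fin n) (Fin m × Fin n) ℂ} (hN : IsEffect N) :
    IsEffect (tensorMap adjG m N) := by
  have hherm : (tensorMap adjG m N).IsHermitian := tensorMap_isHermitian hac hN.1.1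
  have hquad : ∀ x, dotProduct (star x) ((tensorMap adjG m N) *ᵥ x)
      = (N * tensorMap G m (outer x)).trace := fun x => by
    rw [quad_eq_trace_outer, adj_trace_tensor hG]
  constructor
  · refine posSemidef_of_re hherm fun x => ?_
    rw [hquad]
    exact trace_mul_psd_re_nonneg hN.1 (hcp m _ (outer_posSemidef x))
  · refine posSemidef_of_re ((Matrix.isHermitian_one).sub hherm) fun x => ?_
    have hsub : dotProduct (star x) ((1 - tensorMap adjG m N) *ᵥ x)
        = dotProduct (star x) ((1 : Matrix (Fin m × Fin n) (Fin m × Fin n) ℂ) *ᵥ x)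
          - dotProduct (star x) ((tensorMap adjG m N) *ᵥ x) := by
      rw [Matrix.sub_mulVec, dotProduct_sub]
    have h1 : dotProduct (star x) ((1 : Matrix (Fin m × Fin n) (Fin m × Fin n) ℂ) *ᵥ x)
        = (outer x).trace := by
      rw [Matrix.one_mulVec]
      simp [dotProduct, outer, Matrix.trace, Matrix.diag, mul_comm]
    rw [hsub, hquad, h1, Complex.sub_re]
    have h2 : ((N * tensorMap G m (outer x)).trace).re ≤ ((tensorMap G m (outer x)).trace).re :=
      effect_trace_le hN (hcp m _ (outer_posSemidef x))
    have h3 : ((tensorMap G m (outer x)).trace).re ≤ ((outer x).trace).re :=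
      tensorMap_tni htni (outer_posSemidef x)
    linarith

/-! ### Choi matrices -/

def recon {n : ℕ} (J : Matrix (Fin n × Fin n) (Fin n × Fin n) ℂ) :
    Matrix (Fin n) (Fin n) ℂ → Matrix (Fin n) (Fin n) ℂ :=
  fun X => Matrix.of fun i j => (n : ℂ) * ∑ k, ∑ l, X k l * J (i, k) (j, l)

lemma linear_eq_recon (hn : n ≠ 0) {Φ : Matrix (Fin n) (Fin n) ℂ → Matrix (Fin n) (Fin n) ℂ}
    (hlin : IsLinearMap ℂ Φ) (X : Matrix (Fin n) (Fin n) ℂ) :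
    Φ X = recon (choi Φ) X := by
  have hnc : (n : ℂ) ≠ 0 := Nat.cast_ne_zero.mpr hn
  have hdecomp : Φ X = ∑ k, ∑ l, X k l • Φ (Matrix.single k l 1) := by
    have h0 : Φ X = (IsLinearMap.mk' Φ hlin) X := rfl
    rw [h0]
    conv_lhs => rw [Matrix.matrix_eq_sum_single X]
    rw [map_sum]
    refine Finset.sum_congr rfl fun k _ => ?_
    rw [map_sum]
    refine Finset.sum_congr rfl fun l _ => ?_
    rw [show Matrix.single k l (X k l) = X k l • Matrix.single k l (1:ℂ) by
      rw [Matrix.smul_single, smul_eq_mul, mul_one]]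
    rw [_root_.map_smul, IsLinearMap.mk'_apply]
  ext i j
  rw [hdecomp]
  simp only [Matrix.sum_apply, Matrix.smul_apply, recon, Matrix.of_apply, choi,
    smul_eq_mul, Finset.mul_sum]
  refine Finset.sum_congr rfl fun k _ => Finset.sum_congr rfl fun l _ => ?_
  rw [one_div, mul_comm ((n:ℂ)) _, mul_assoc]
  rw [mul_comm ((n:ℂ)⁻¹) _, mul_assoc, inv_mul_cancel₀ hnc, mul_one]

lemma choi_recon (hn : n ≠ 0) (J : Matrix (Fin n × Fin n) (Fin n × Fin n) ℂ) :
    choi (recon J) = J := by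
  have hnc : (n : ℂ) ≠ 0 := Nat.cast_ne_zero.mpr hn
  ext p q
  show (1/(n:ℂ)) * ((n : ℂ) * ∑ k, ∑ l, Matrix.single p.2 q.2 (1:ℂ) k l * J (p.1, k) (q.1, l)) = J p q
  have hsum : ∑ k, ∑ l, Matrix.single p.2 q.2 (1:ℂ) k l * J (p.1, k) (q.1, l)
      = J (p.1, p.2) (q.1, q.2) := by
    simp [Matrix.single, Matrix.of_apply, ite_and, ite_mul, one_mul, zero_mul,
      Finset.sum_ite_eq]
  rw [hsum, ← mul_assoc, one_div, inv_mul_cancel₀ hnc, one_mul]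

lemma recon_conjTranspose {J : Matrix (Fin n × Fin n) (Fin n × Fin n) ℂ} (hJ : J.IsHermitian)
    (X : Matrix (Fin n) (Fin n) ℂ) : recon J (Xᴴ) = (recon J X)ᴴ := by
  have hJ' : ∀ a b : Fin n × Fin n, (starRingEnd ℂ) (J a b) = J b a := fun a b => by
    conv_rhs => rw [← hJ]
    simp [Matrix.conjTranspose_apply]
  ext i j
  show (n : ℂ) * ∑ k, ∑ l, Xᴴ k l * J (i, k) (j, l)
      = (starRingEnd ℂ) ((n : ℂ) * ∑ k, ∑ l, X k l * J (j, k) (i, l))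
  simp only [map_sum, _root_.map_mul, map_natCast, Matrix.conjTranspose_apply, hJ']
  congr 1
  rw [Finset.sum_comm]
  exact Finset.sum_congr rfl fun k _ => Finset.sum_congr rfl fun l _ => rfl

lemma sum_comm3 {M : Type*} [AddCommMonoid M] {α β γ : Type*} [Fintype α] [Fintype β] [Fintype γ]
    (f : α → β → γ → M) :
    ∑ a, ∑ b, ∑ c, f a b c = ∑ c, ∑ b, ∑ a, f a b c :=
  calc ∑ a, ∑ b, ∑ c, f a b c
      = ∑ a, ∑ c, ∑ b, f a b c := Finset.sum_congr rfl (fun a _ => Finset.sum_comm)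
    _ = ∑ c, ∑ a, ∑ b, f a b c := Finset.sum_comm
    _ = ∑ c, ∑ b, ∑ a, f a b c := Finset.sum_congr rfl (fun c _ => Finset.sum_comm)

lemma kraus (hn : n ≠ 0) {Φ : Matrix (Fin n) (Fin n) ℂ → Matrix (Fin n) (Fin n) ℂ}
    (hlin : IsLinearMap ℂ Φ)
    {B : Matrix (Fin n × Fin n) (Fin n × Fin n) ℂ} (hB : choi Φ = Bᴴ * B)
    (X : Matrix (Fin n) (Fin n) ℂ) :
    Φ X = (n : ℂ) • ∑ r : Fin n × Fin n,
      (Matrix.of fun i k => (starRingEnd ℂ) (B r (i, k))) * X *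
      (Matrix.of fun i k => (starRingEnd ℂ) (B r (i, k)))ᴴ := by
  rw [linear_eq_recon hn hlin]
  ext i j
  simp only [recon, Matrix.of_apply, Matrix.smul_apply, Matrix.sum_apply, Matrix.mul_apply,
    Matrix.conjTranspose_apply, hB, smul_eq_mul, Complex.conj_conj]
  refine congrArg (fun z : ℂ => (n:ℂ) * z) ?_
  have hL : ∑ k, ∑ l, X k l * (∑ r, star (B r (i, k)) * B r (j, l))
      = ∑ k, ∑ l, ∑ r : Fin n × Fin n, X k l * (star (B r (i, k)) * B r (j, l)) :=
    Finset.sum_congr rfl fun k _ => Finset.sum_congr rfl fun l _ => Finset.mul_sum _ _ _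
  have hR : ∑ r : Fin n × Fin n, ∑ l, (∑ k, (starRingEnd ℂ) (B r (i, k)) * X k l) * star ((starRingEnd ℂ) (B r (j, l)))
      = ∑ r : Fin n × Fin n, ∑ l, ∑ k, X k l * (star (B r (i, k)) * B r (j, l)) := by
    refine Finset.sum_congr rfl fun r _ => Finset.sum_congr rfl fun l _ => ?_
    rw [Finset.sum_mul]
    refine Finset.sum_congr rfl fun k _ => ?_
    simp only [RCLike.star_def, Complex.conj_conj]
    ring
  rw [hL, hR, sum_comm3]

lemma psd_smul_nat {d : Type*} [Fintype d] [DecidableEq d] {A : Matrix d d ℂ}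
    (hA : A.PosSemidef) (n : ℕ) : ((n : ℂ) • A).PosSemidef := by
  have h : ((n : ℂ) • A) = ((n : ℝ) • A) := by
    ext i j
    simp [Complex.real_smul]
  rw [h]
  exact psd_smul_real hA (Nat.cast_nonneg n)

lemma isCP_of_choi_psd (hn : n ≠ 0) {Φ : Matrix (Fin n) (Fin n) ℂ → Matrix (Fin n) (Fin n) ℂ}
    (hlin : IsLinearMap ℂ Φ) (hJ : (choi Φ).PosSemidef) : IsCP Φ := by
  obtain ⟨B, hB⟩ := psd_eq_conjTranspose_mul_self hJ
  intro m A hA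
  have key : tensorMap Φ m A = (n : ℂ) • ∑ r : Fin n × Fin n,
      (Matrix.of fun (p : Fin m × Fin n) (u : Fin m × Fin n) =>
        if p.1 = u.1 then (starRingEnd ℂ) (B r (p.2, u.2)) else 0) * A *
      (Matrix.of fun (p : Fin m × Fin n) (u : Fin m × Fin n) =>
        if p.1 = u.1 then (starRingEnd ℂ) (B r (p.2, u.2)) else 0)ᴴ := by
    ext p q
    rw [tensorMap_apply, kraus hn hlin hB]
    simp only [Matrix.smul_apply, Matrix.sum_apply, Matrix.mul_apply, Matrix.conjTranspose_apply,
      Matrix.of_apply, Fintype.sum_prod_type, blk, ite_mul, mul_ite, zero_mul, mul_zero,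
      apply_ite (star : ℂ → ℂ), star_zero, Finset.sum_ite_irrel, Finset.sum_const_zero,
      Finset.sum_ite_eq, Finset.sum_ite_eq', Finset.mem_univ, if_true, smul_eq_mul]
  rw [key]
  exact psd_smul_nat (psd_sum _ _ fun r _ => hA.mul_mul_conjTranspose_same _) n

/-! ### Omega and further Choi facts -/

def omegaMat (n : ℕ) : Matrix (Fin n × Fin n) (Fin n × Fin n) ℂ :=
  Matrix.of fun p q => if p.1 = p.2 ∧ q.1 = q.2 then (1/(n:ℂ)) else 0

lemma omega_posSemidef : (omegaMat n).PosSemidef := by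
  refine Matrix.PosSemidef.of_dotProduct_mulVec_nonneg ?_ ?_
  · ext p q
    simp only [omegaMat, Matrix.conjTranspose_apply, Matrix.of_apply,
      apply_ite (star : ℂ → ℂ), star_zero]
    by_cases hc : p.1 = p.2 ∧ q.1 = q.2
    · rw [if_pos ⟨hc.2, hc.1⟩, if_pos hc, star_div₀, star_one, star_natCast]
    · rw [if_neg (fun hh => hc ⟨hh.2, hh.1⟩), if_neg hc]
  · intro x
    have h : dotProduct (star x) ((omegaMat n) *ᵥ x)
        = (1/(n:ℂ)) * ((starRingEnd ℂ) (∑ b, x (b, b)) * (∑ b, x (b, b))) := by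
      simp only [dotProduct, Matrix.mulVec, omegaMat, Matrix.of_apply, Pi.star_apply,
        Fintype.sum_prod_type, ite_and, ite_mul, mul_ite, zero_mul, mul_zero,
        Finset.sum_ite_irrel, Finset.sum_const_zero, Finset.sum_ite_eq, Finset.mem_univ, if_true,
        RCLike.star_def, Finset.mul_sum, Finset.sum_mul]
      rw [Finset.sum_comm]
      refine Finset.sum_congr rfl fun a _ => ?_
      rw [map_sum, Finset.sum_mul, Finset.mul_sum]
      refine Finset.sum_congr rfl fun b _ => by ring
    rw [h]
    have h2 : (starRingEnd ℂ) (∑ b, x (b, b)) * (∑ b, x (b, b))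
        = ((Complex.normSq (∑ b, x (b, b)) : ℝ) : ℂ) := by
      rw [mul_comm, Complex.mul_conj]
    rw [h2, show (1/(n:ℂ)) = (((1/(n:ℝ)) : ℝ) : ℂ) by push_cast; ring, ← Complex.ofReal_mul]
    exact Complex.zero_le_real.mpr (mul_nonneg (by positivity) (Complex.normSq_nonneg _))

lemma blk_omega (a b : Fin n) :
    blk (omegaMat n) a b = (1/(n:ℂ)) • Matrix.single a b (1:ℂ) := by
  ext i j
  show (if a = i ∧ b = j then (1/(n:ℂ)) else 0) = (1/(n:ℂ)) • (if a = i ∧ b = j then (1:ℂ) else 0)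
  by_cases h : a = i ∧ b = j
  · simp [h]
  · simp [h]

lemma tensorMap_omega {Φ : Matrix (Fin n) (Fin n) ℂ → Matrix (Fin n) (Fin n) ℂ}
    (hlin : IsLinearMap ℂ Φ) :
    tensorMap Φ n (omegaMat n)
      = (choi Φ).submatrix (Equiv.prodComm (Fin n) (Fin n)) (Equiv.prodComm (Fin n) (Fin n)) := by
  ext p q
  have hs := hlin.map_smul (1/(n:ℂ)) (Matrix.single p.1 q.1 1)
  rw [tensorMap_apply, blk_omega, hs]
  simp [choi, Matrix.smul_apply, Matrix.submatrix_apply, Equiv.prodComm_apply, smul_eq_mul]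

lemma choi_psd_of_cp {Φ : Matrix (Fin n) (Fin n) ℂ → Matrix (Fin n) (Fin n) ℂ}
    (hlin : IsLinearMap ℂ Φ) (hcp : IsCP Φ) : (choi Φ).PosSemidef := by
  have h := hcp n (omegaMat n) omega_posSemidef
  rw [tensorMap_omega hlin] at h
  exact (Matrix.posSemidef_submatrix_equiv (Equiv.prodComm (Fin n) (Fin n))).mp h

lemma stdBasis_diag_psd (k : Fin n) : (Matrix.single k k (1:ℂ)).PosSemidef := by
  have h : Matrix.single k k (1:ℂ) = outer (Pi.single k 1) := by
    ext i j
    rcases eq_or_ne k i with rfl | h1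
    · rcases eq_or_ne k j with rfl | h2
      · simp [Matrix.single, outer, Pi.single_apply]
      · simp [Matrix.single, outer, Pi.single_apply, h2, Ne.symm h2]
    · rcases eq_or_ne k j with rfl | h2
      · simp [Matrix.single, outer, Pi.single_apply, h1, Ne.symm h1]
      · simp [Matrix.single, outer, Pi.single_apply, h1, h2, Ne.symm h1, Ne.symm h2]
  rw [h]
  exact outer_posSemidef _

lemma choi_trace_re_le_one {Φ : Matrix (Fin n) (Fin n) ℂ → Matrix (Fin n) (Fin n) ℂ}
    (htni : IsTNI Φ) : ((choi Φ).trace).re ≤ 1 := by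
  have htr : (choi Φ).trace = (1/(n:ℂ)) * ∑ k, (Φ (Matrix.single k k 1)).trace := by
    simp only [Matrix.trace, Matrix.diag, choi, Fintype.sum_prod_type, Finset.mul_sum]
    rw [Finset.sum_comm]
  have hre : ((choi Φ).trace).re = (1/(n:ℝ)) * (∑ k, (Φ (Matrix.single k k 1)).trace).re := by
    rw [htr, show (1/(n:ℂ)) = ((1/(n:ℝ) : ℝ) : ℂ) by push_cast; ring]
    rw [Complex.re_ofReal_mul]
  rw [hre, Complex.re_sum]
  have hone : ∀ k : Fin n, ((Matrix.single k k (1:ℂ)).trace) = 1 := fun k => by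
    simp [Matrix.trace, Matrix.diag, Matrix.single, Finset.sum_ite_eq]
  have hbound : ∑ k, ((Φ (Matrix.single k k 1)).trace).re ≤ (n : ℝ) := by
    calc ∑ k, ((Φ (Matrix.single k k 1)).trace).re
        ≤ ∑ _k : Fin n, (1:ℝ) := Finset.sum_le_sum fun k _ => by
          have h := htni _ (stdBasis_diag_psd k)
          rw [hone k] at h
          simpa using h
      _ = (n : ℝ) := by simp
  have hfin : (1/(n:ℝ)) * (n:ℝ) ≤ 1 := by
    rcases Nat.eq_zero_or_pos n with h | h
    · simp [h]
    · rw [one_div, inv_mul_cancel₀ (by positivity)]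
  calc (1/(n:ℝ)) * ∑ k, ((Φ (Matrix.single k k 1)).trace).re
      ≤ (1/(n:ℝ)) * (n:ℝ) := by
        apply mul_le_mul_of_nonneg_left hbound
        positivity
    _ ≤ 1 := hfin

lemma choi_sub {Φ Ψ : Matrix (Fin n) (Fin n) ℂ → Matrix (Fin n) (Fin n) ℂ} :
    choi (Φ - Ψ) = choi Φ - choi Ψ := by
  ext p q
  simp [choi, Pi.sub_apply, Matrix.sub_apply, mul_sub]

/-! ### Misc analytic lemmas -/

lemma single_quad {d : Type*} [Fintype d] [DecidableEq d] (J : Matrix d d ℂ) (p q : d) (a b : ℂ) :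
    dotProduct (star (Pi.single p a)) (J *ᵥ Pi.single q b)
      = (starRingEnd ℂ) a * (J p q * b) := by
  simp only [dotProduct, Matrix.mulVec, Pi.star_apply, Pi.single_apply, apply_ite (star : ℂ → ℂ),
    star_zero, ite_mul, mul_ite, zero_mul, mul_zero, Finset.sum_ite_eq, Finset.sum_ite_eq',
    Finset.mem_univ, if_true, RCLike.star_def, Finset.sum_ite_irrel, Finset.sum_const_zero]

lemma psd_diag_re_le_trace {d : Type*} [Fintype d] [DecidableEq d] {A : Matrix d d ℂ}
    (hA : A.PosSemidef) (p : d) : (A p p).re ≤ (A.trace).re := by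
  rw [Matrix.trace, Complex.re_sum]
  exact Finset.single_le_sum
    (fun i _ => (Complex.nonneg_iff.mp (psd_diag_nonneg hA i)).1) (Finset.mem_univ p)

lemma psd_offdiag {d : Type*} [Fintype d] [DecidableEq d] {A : Matrix d d ℂ}
    (hA : A.PosSemidef) {p q : d} (hpq : p ≠ q) :
    2 * ‖A p q‖ ≤ (A p p).re + (A q q).re := by
  rcases eq_or_ne (A p q) 0 with h0 | h0
  · have h1 := (Complex.nonneg_iff.mp (psd_diag_nonneg hA p)).1
    have h2 := (Complex.nonneg_iff.mp (psd_diag_nonneg hA q)).1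
    simp [h0]
    linarith
  · set c := ‖A p q‖ with hc
    have hcpos : 0 < c := norm_pos_iff.mpr h0
    set b : ℂ := -((starRingEnd ℂ) (A p q)) / (c : ℂ) with hb
    have hquad := hA.dotProduct_mulVec_nonneg (Pi.single p 1 + Pi.single q b)
    have hexp : dotProduct (star (Pi.single p 1 + Pi.single q b))
        (A *ᵥ (Pi.single p 1 + Pi.single q b))
        = (starRingEnd ℂ) 1 * (A p p * 1) + (starRingEnd ℂ) 1 * (A p q * b)
          + ((starRingEnd ℂ) b * (A q p * 1) + (starRingEnd ℂ) b * (A q q * b)) := by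
    
      rw [star_add, Matrix.mulVec_add, add_dotProduct, dotProduct_add, dotProduct_add,
        single_quad, single_quad, single_quad, single_quad]
    have hApq : A q p = (starRingEnd ℂ) (A p q) := by
      have := congrFun (congrFun hA.1 q) p
      simpa [Matrix.conjTranspose_apply] using this.symm
    have hz : A p q * (starRingEnd ℂ) (A p q) = (((c^2 : ℝ)) : ℂ) := by
      rw [Complex.mul_conj, ← Complex.sq_norm, ← hc]
    have hcc : (((c^2 : ℝ)) : ℂ) / ((c:ℝ):ℂ) = ((c:ℝ):ℂ) := by
      rw [← Complex.ofReal_div, sq, mul_div_assoc, div_self (ne_of_gt hcpos), mul_one]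
    have e1 : A p q * b = -((c : ℝ) : ℂ) := by
      rw [hb]
      calc A p q * (-((starRingEnd ℂ) (A p q)) / ((c:ℝ):ℂ))
          = -((A p q * (starRingEnd ℂ) (A p q)) / ((c:ℝ):ℂ)) := by ring
        _ = -((c : ℝ) : ℂ) := by rw [hz, hcc]
    have e2 : (starRingEnd ℂ) b * (A q p * 1) = -((c : ℝ) : ℂ) := by
      rw [hApq, mul_one, hb, map_div₀, map_neg, Complex.conj_conj, Complex.conj_ofReal]
      calc -(A p q) / ((c:ℝ):ℂ) * (starRingEnd ℂ) (A p q)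
          = -((A p q * (starRingEnd ℂ) (A p q)) / ((c:ℝ):ℂ)) := by ring
        _ = -((c : ℝ) : ℂ) := by rw [hz, hcc]
    have e3 : (starRingEnd ℂ) b * (A q q * b) = A q q * ((Complex.normSq b : ℝ) : ℂ) := by
      rw [show (starRingEnd ℂ) b * (A q q * b) = A q q * (b * (starRingEnd ℂ) b) by ring,
        Complex.mul_conj]
    have hnb : Complex.normSq b = 1 := by
      rw [hb, map_div₀, Complex.normSq_neg, Complex.normSq_conj, Complex.normSq_ofReal,
        ← Complex.sq_norm, ← hc, sq]
      field_simp
    rw [hexp, e1, e2, e3, hnb] at hquad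
    have hre := (Complex.nonneg_iff.mp hquad).1
    have hAqqim : (A q q).im = 0 := (Complex.nonneg_iff.mp (psd_diag_nonneg hA q)).2.symm
    simp only [_root_.map_one, one_mul, mul_one, Complex.ofReal_one, Complex.add_re,
      Complex.neg_re, Complex.ofReal_re, Complex.mul_re, Complex.ofReal_im, mul_zero,
      zero_mul, sub_zero, add_zero, hAqqim] at hre
    linarith

lemma psd_entry_abs_le {d : Type*} [Fintype d] [DecidableEq d] {A : Matrix d d ℂ}
    (hA : A.PosSemidef) (htr : (A.trace).re ≤ 1) (p q : d) : ‖A p q‖ ≤ 1 := by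
  rcases eq_or_ne p q with rfl | hpq
  · have h0 := psd_diag_nonneg hA p
    have habs : ‖A p p‖ = (A p p).re := (Complex.re_eq_norm.mpr h0).symm
    rw [habs]
    exact le_trans (psd_diag_re_le_trace hA p) htr
  · have h2 := psd_offdiag hA hpq
    have h3 : (A p p).re + (A q q).re ≤ (A.trace).re := by
      rw [Matrix.trace, Complex.re_sum]
      have hsub := Finset.sum_le_sum_of_subset_of_nonneg
        (Finset.subset_univ ({p, q} : Finset d))
        (fun i _ _ => (Complex.nonneg_iff.mp (psd_diag_nonneg hA i)).1)
      rw [Finset.sum_pair hpq] at hsub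
      exact hsub
    linarith

lemma psd_of_tendsto {d : Type*} [Fintype d] [DecidableEq d] {f : ℕ → Matrix d d ℂ}
    {L : Matrix d d ℂ} (hf : ∀ i, (f i).PosSemidef)
    (hL : Filter.Tendsto f Filter.atTop (nhds L)) : L.PosSemidef := by
  have hent : ∀ p q, Filter.Tendsto (fun i => f i p q) Filter.atTop (nhds (L p q)) := by
    intro p q
    exact tendsto_pi_nhds.mp (tendsto_pi_nhds.mp hL p) q
  have hherm : L.IsHermitian := by
    show Lᴴ = L
    ext p q
    rw [Matrix.conjTranspose_apply]
    have h1 : Filter.Tendsto (fun i => star (f i q p)) Filter.atTop (nhds (star (L q p))) :=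
      ((Complex.continuous_conj.tendsto _).comp (hent q p))
    have h2 : (fun i => star (f i q p)) = fun i => f i p q := by
      funext i
      have := congrFun (congrFun (hf i).1 p) q
      simpa [Matrix.conjTranspose_apply] using this
    rw [h2] at h1
    exact tendsto_nhds_unique h1 (hent p q)
  refine posSemidef_of_re hherm fun x => ?_
  have hcont : Filter.Tendsto (fun i => dotProduct (star x) ((f i) *ᵥ x)) Filter.atTop
      (nhds (dotProduct (star x) (L *ᵥ x))) := by
    have : ∀ M : Matrix d d ℂ, dotProduct (star x) (M *ᵥ x) = ∑ p, star (x p) * ∑ q, M p q * x q := by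
      intro M; rfl
    simp only [this]
    refine tendsto_finset_sum _ fun p _ => Filter.Tendsto.const_mul _ ?_
    refine tendsto_finset_sum _ fun q _ => ?_
    exact (hent p q).mul_const _
  have hre : Filter.Tendsto (fun i => (dotProduct (star x) ((f i) *ᵥ x)).re) Filter.atTop
      (nhds ((dotProduct (star x) (L *ᵥ x)).re)) :=
    (Complex.continuous_re.tendsto _).comp hcont
  exact ge_of_tendsto hre (Filter.Eventually.of_forall fun i =>
    (Complex.nonneg_iff.mp ((hf i).dotProduct_mulVec_nonneg x)).1)

lemma choi_combo {n : ℕ} (a b : ℝ) (E1 E2 : Matrix (Fin n) (Fin n) ℂ → Matrix (Fin n) (Fin n) ℂ) :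
    choi (a • E1 + b • E2) = a • choi E1 + b • choi E2 := by
  ext p q
  simp only [choi, Pi.add_apply, Pi.smul_apply, Matrix.add_apply, Matrix.smul_apply,
    Complex.real_smul]
  ring

lemma trace_submatrix_equiv' {d e : Type*} [Fintype d] [Fintype e] (A : Matrix d d ℂ) (σ : e ≃ d) :
    (A.submatrix σ σ).trace = A.trace := by
  simp only [Matrix.trace, Matrix.diag, Matrix.submatrix_apply]
  exact Equiv.sum_comp σ fun i => A i i

lemma cptn_conjTranspose {n : ℕ} (hn : n ≠ 0)
    {G : Matrix (Fin n) (Fin n) ℂ → Matrix (Fin n) (Fin n) ℂ} (hG : IsCPTN G)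
    (X : Matrix (Fin n) (Fin n) ℂ) : G (Xᴴ) = (G X)ᴴ := by
  rw [linear_eq_recon hn hG.1 (Xᴴ), linear_eq_recon hn hG.1 X,
    recon_conjTranspose (choi_psd_of_cp hG.1 hG.2.1).1]

lemma omega_trace_re_le_one {n : ℕ} : ((omegaMat n).trace).re ≤ 1 := by
  have h : (omegaMat n).trace = ∑ _a : Fin n, (1/(n:ℂ)) := by
    simp only [Matrix.trace, Matrix.diag, omegaMat, Matrix.of_apply, Fintype.sum_prod_type]
    refine Finset.sum_congr rfl fun a _ => ?_
    simp [Finset.sum_ite_eq, and_self]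
  rw [h]
  simp only [Finset.sum_const, Finset.card_univ, Fintype.card_fin, nsmul_eq_mul]
  rw [show ((n:ℂ) * (1/(n:ℂ))) = (((n:ℝ) * (1/(n:ℝ)) : ℝ) : ℂ) by push_cast; ring]
  rw [Complex.ofReal_re]
  rcases Nat.eq_zero_or_pos n with h0 | h0
  · simp [h0]
  · rw [mul_one_div, div_self (by positivity)]

/-! ### The separating functional as a matrix -/

def W0 {d : Type*} [Fintype d] [DecidableEq d] (f : Matrix d d ℂ →L[ℝ] ℝ) : Matrix d d ℂ :=
  Matrix.of fun p q =>
    ((f (Matrix.single q p 1) : ℝ) : ℂ)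
      - Complex.I * ((f (Complex.I • Matrix.single q p 1) : ℝ) : ℂ)

lemma stdBasis_decomp {d : Type*} [Fintype d] [DecidableEq d] (z : ℂ) (i j : d) :
    Matrix.single i j z = (z.re : ℝ) • Matrix.single i j (1:ℂ)
      + (z.im : ℝ) • (Complex.I • Matrix.single i j (1:ℂ)) := by
  ext a b
  by_cases h : i = a ∧ j = b
  · obtain ⟨rfl, rfl⟩ := h
    simp only [Matrix.single, Matrix.of_apply, Matrix.add_apply, Matrix.smul_apply,
      and_self, if_true, Complex.real_smul, smul_eq_mul]
    rw [mul_one, show Complex.I * (1:ℂ) = Complex.I from mul_one _]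
    exact (Complex.re_add_im z).symm
  · simp [Matrix.single, h]

lemma W0_trace_re {d : Type*} [Fintype d] [DecidableEq d] (f : Matrix d d ℂ →L[ℝ] ℝ)
    (X : Matrix d d ℂ) : ((W0 f * X).trace).re = f X := by
  rw [trace_mul_eq]
  simp only [Complex.re_sum]
  have hterm : ∀ p q, ((W0 f p q) * X q p).re
      = (X q p).re * f (Matrix.single q p 1)
        + (X q p).im * f (Complex.I • Matrix.single q p 1) := by
    intro p q
    rw [Complex.mul_re]
    have hre : (W0 f p q).re = f (Matrix.single q p 1) := by
      simp [W0, Complex.sub_re, Complex.mul_re]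
    have him : (W0 f p q).im = - f (Complex.I • Matrix.single q p 1) := by
      simp [W0, Complex.sub_im, Complex.mul_im]
    rw [hre, him]
    ring
  have hfX : f X = ∑ p, ∑ q, ((X p q).re * f (Matrix.single p q 1)
      + (X p q).im * f (Complex.I • Matrix.single p q 1)) := by
    conv_lhs => rw [Matrix.matrix_eq_sum_single X]
    rw [map_sum]
    refine Finset.sum_congr rfl fun p _ => ?_
    rw [map_sum]
    refine Finset.sum_congr rfl fun q _ => ?_
    rw [stdBasis_decomp (X p q) p q, map_add]
    simp only [ContinuousLinearMap.map_smul, smul_eq_mul]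
  rw [hfX, Finset.sum_comm]
  refine Finset.sum_congr rfl fun p _ => Finset.sum_congr rfl fun q _ => ?_
  rw [hterm q p]

def Wmat {d : Type*} [Fintype d] [DecidableEq d] (f : Matrix d d ℂ →L[ℝ] ℝ) : Matrix d d ℂ :=
  (2⁻¹ : ℝ) • (W0 f + (W0 f)ᴴ)

lemma Wmat_isHermitian {d : Type*} [Fintype d] [DecidableEq d] (f : Matrix d d ℂ →L[ℝ] ℝ) :
    (Wmat f).IsHermitian := by
  show (Wmat f)ᴴ = Wmat f
  rw [Wmat, Matrix.conjTranspose_smul, star_trivial, Matrix.conjTranspose_add,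
    Matrix.conjTranspose_conjTranspose, add_comm]

lemma Wmat_trace_re {d : Type*} [Fintype d] [DecidableEq d] (f : Matrix d d ℂ →L[ℝ] ℝ)
    {X : Matrix d d ℂ} (hX : X.IsHermitian) : ((Wmat f * X).trace).re = f X := by
  have h1 : Wmat f * X = (2⁻¹ : ℝ) • (W0 f * X + (W0 f)ᴴ * X) := by
    rw [Wmat, Matrix.smul_mul, Matrix.add_mul]
  rw [h1, Matrix.trace_smul, Matrix.trace_add]
  have h2 : ((W0 f)ᴴ * X).trace = star ((W0 f * X).trace) := by
    have h3 : (W0 f)ᴴ * X = ((Xᴴ) * (W0 f))ᴴ := by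
      rw [Matrix.conjTranspose_mul, Matrix.conjTranspose_conjTranspose]
    rw [h3, Matrix.trace_conjTranspose, Matrix.trace_mul_comm, hX.eq]
  rw [h2]
  rw [Complex.smul_re, Complex.add_re, RCLike.star_def, Complex.conj_re, W0_trace_re]
  simp only [smul_eq_mul]
  ring

lemma Wmat_psd {d : Type*} [Fintype d] [DecidableEq d] (f : Matrix d d ℂ →L[ℝ] ℝ)
    (hf : ∀ P : Matrix d d ℂ, P.PosSemidef → 0 ≤ f P) : (Wmat f).PosSemidef := by
  refine posSemidef_of_re (Wmat_isHermitian f) fun x => ?_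
  rw [quad_eq_trace_outer, Wmat_trace_re f (outer_posSemidef x).1]
  exact hf _ (outer_posSemidef x)

/-! ### demExp helpers -/

lemma demExp_eq {d : Type*} [Fintype d] {Θ : Set (Matrix d d ℂ)} (ρ : Matrix d d ℂ)
    (hne : Θ.Nonempty) : demExp Θ ρ = sInf ((fun M => ((M * ρ).trace).re) '' Θ) := by
  rw [demExp, if_neg (Set.nonempty_iff_ne_empty.mp hne)]

lemma le_demExp {d : Type*} [Fintype d] {Θ : Set (Matrix d d ℂ)} {ρ : Matrix d d ℂ} {c : ℝ}
    (hne : Θ.Nonempty) (h : ∀ M ∈ Θ, c ≤ ((M * ρ).trace).re) : c ≤ demExp Θ ρ := by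
  rw [demExp_eq ρ hne]
  refine le_csInf (hne.image _) ?_
  rintro b ⟨M, hM, rfl⟩
  exact h M hM

lemma demExp_le_of_mem {d : Type*} [Fintype d] {Θ : Set (Matrix d d ℂ)} {ρ M0 : Matrix d d ℂ}
    (hM0 : M0 ∈ Θ) (h0 : ∀ M ∈ Θ, 0 ≤ ((M * ρ).trace).re) :
    demExp Θ ρ ≤ ((M0 * ρ).trace).re := by
  rw [demExp_eq ρ ⟨M0, hM0⟩]
  refine csInf_le ⟨0, ?_⟩ ⟨M0, hM0, rfl⟩
  rintro b ⟨M, hM, rfl⟩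
  exact h0 M hM

end NTR

open NTR in
theorem nondet_total_refinement_iff_smyth {n : ℕ}
    (𝔼 𝔽 : Set (Matrix (Fin n) (Fin n) ℂ → Matrix (Fin n) (Fin n) ℂ))
    (adj : (Matrix (Fin n) (Fin n) ℂ → Matrix (Fin n) (Fin n) ℂ) →
           (Matrix (Fin n) (Fin n) ℂ → Matrix (Fin n) (Fin n) ℂ))
    (h𝔼 : ∀ E ∈ 𝔼, IsCPTN E) (h𝔽 : ∀ F ∈ 𝔽, IsCPTN F)
    (h𝔼ne : 𝔼.Nonempty) (h𝔽ne : 𝔽.Nonempty)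
    (h𝔼cv : Convex ℝ 𝔼) (h𝔽cv : Convex ℝ 𝔽)
    (h𝔼cl : IsClosed 𝔼) (h𝔽cl : IsClosed 𝔽)
    (hadj : ∀ G, (G ∈ 𝔼 ∨ G ∈ 𝔽) →
      ∀ A B : Matrix (Fin n) (Fin n) ℂ, (G A * B).trace = (A * adj G B).trace) :
    -- 𝔼 ≤_T^s 𝔽 : every total-correctness specification of 𝔼 holds of 𝔽
    (∀ (m : ℕ) (Θ Ψ : Set (Matrix (Fin m × Fin n) (Fin m × Fin n) ℂ)),
        (∀ M ∈ Θ, IsEffect M) → (∀ N ∈ Ψ, IsEffect N) →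
        (∀ ρ : Matrix (Fin m × Fin n) (Fin m × Fin n) ℂ, IsDensity ρ →
          demExp Θ ρ ≤ demExp {M | ∃ E ∈ 𝔼, ∃ N ∈ Ψ, M = tensorMap (adj E) m N} ρ) →
        (∀ ρ : Matrix (Fin m × Fin n) (Fin m × Fin n) ℂ, IsDensity ρ →
          demExp Θ ρ ≤ demExp {M | ∃ F ∈ 𝔽, ∃ N ∈ Ψ, M = tensorMap (adj F) m N} ρ)) ↔
      -- Smyth order in the complete-positivity order
      (∀ F ∈ 𝔽, ∃ E ∈ 𝔼, IsCP (F - E)) := by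
  constructor
  · -- refinement implies Smyth
    intro href
    rcases Nat.eq_zero_or_pos n with hn0 | hnpos
    · -- degenerate case `n = 0` : every map is CP
      subst hn0
      intro F hF
      obtain ⟨E, hE⟩ := h𝔼ne
      refine ⟨E, hE, ?_⟩
      intro m A _hA
      refine Matrix.PosSemidef.of_dotProduct_mulVec_nonneg ?_ ?_
      · show (tensorMap (F - E) m A)ᴴ = tensorMap (F - E) m A
        ext p q
        exact p.2.elim0
      · intro x
        simp [dotProduct]
    · have hn : n ≠ 0 := Nat.pos_iff_ne_zero.mp hnpos
      by_contra hcon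
      push_neg at hcon
      obtain ⟨F₀, hF₀, hnc⟩ := hcon
      classical
      letI instMS : MetricSpace (Matrix (Fin n × Fin n) (Fin n × Fin n) ℂ) :=
        inferInstanceAs (MetricSpace ((Fin n × Fin n) → (Fin n × Fin n) → ℂ))
      letI instPS : ProperSpace (Matrix (Fin n × Fin n) (Fin n × Fin n) ℂ) :=
        inferInstanceAs (ProperSpace ((Fin n × Fin n) → (Fin n × Fin n) → ℂ))
      letI instLC : LocallyConvexSpace ℝ (Matrix (Fin n × Fin n) (Fin n × Fin n) ℂ) :=
        inferInstanceAs (LocallyConvexSpace ℝ ((Fin n × Fin n) → (Fin n × Fin n) → ℂ))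
      letI instTAG : IsTopologicalAddGroup (Matrix (Fin n × Fin n) (Fin n × Fin n) ℂ) :=
        inferInstanceAs (IsTopologicalAddGroup ((Fin n × Fin n) → (Fin n × Fin n) → ℂ))
      obtain ⟨E₀, hE₀⟩ := h𝔼ne
      -- the set of Choi matrices of 𝔼
      set S : Set (Matrix (Fin n × Fin n) (Fin n × Fin n) ℂ) := (fun E => choi E) '' 𝔼
        with hSdef
      have hSprop : ∀ J ∈ S, J.PosSemidef ∧ (J.trace).re ≤ 1 := by
        rintro J ⟨E, hE, rfl⟩
        exact ⟨choi_psd_of_cp (h𝔼 E hE).1 (h𝔼 E hE).2.1,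
          choi_trace_re_le_one (h𝔼 E hE).2.2⟩
      have hSbdd : Bornology.IsBounded S := by
        refine (Metric.isBounded_closedBall
          (x := (0 : Matrix (Fin n × Fin n) (Fin n × Fin n) ℂ)) (r := 1)).subset ?_
        intro J hJ
        obtain ⟨h1, h2⟩ := hSprop J hJ
        rw [Metric.mem_closedBall]
        refine (dist_pi_le_iff zero_le_one).mpr ?_
        intro p
        rw [dist_pi_le_iff zero_le_one]
        intro q
        show dist (J p q) ((0 : Matrix (Fin n × Fin n) (Fin n × Fin n) ℂ) p q) ≤ 1
        rw [show ((0 : Matrix (Fin n × Fin n) (Fin n × Fin n) ℂ) p q) = 0 from rfl,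
          Complex.dist_eq, sub_zero]
        exact psd_entry_abs_le h1 h2 p q
      have hSclosed : IsClosed S := by
        refine IsSeqClosed.isClosed ?_
        intro x J hx hJlim
        choose Ef hEf hchoi using hx
        have hconv : Filter.Tendsto Ef Filter.atTop (nhds (recon J)) := by
          rw [tendsto_pi_nhds]
          intro X
          refine tendsto_pi_nhds.mpr ?_
          intro i
          rw [tendsto_pi_nhds]
          intro j
          have hrw : ∀ k, Ef k X i j = (n:ℂ) * ∑ a, ∑ b, X a b * (x k) (i,a) (j,b) := by
            intro k
            conv_lhs => rw [linear_eq_recon hn (h𝔼 _ (hEf k)).1 X]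
            rw [show choi (Ef k) = x k from hchoi k]
            rfl
          have hcont : Filter.Tendsto (fun k => (n:ℂ) * ∑ a, ∑ b, X a b * (x k) (i,a) (j,b))
              Filter.atTop (nhds ((n:ℂ) * ∑ a, ∑ b, X a b * J (i,a) (j,b))) := by
            refine Filter.Tendsto.const_mul _ ?_
            refine tendsto_finset_sum _ fun a _ => ?_
            refine tendsto_finset_sum _ fun b _ => ?_
            exact Filter.Tendsto.const_mul _
              ((tendsto_pi_nhds.mp ((tendsto_pi_nhds.mp hJlim) (i,a))) (j,b))
          exact Filter.Tendsto.congr (fun k => (hrw k).symm) hcont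
        have hEinf : recon J ∈ 𝔼 := h𝔼cl.mem_of_tendsto hconv (Filter.Eventually.of_forall hEf)
        exact ⟨recon J, hEinf, choi_recon hn J⟩
      have hScpt : IsCompact S := Metric.isCompact_of_isClosed_isBounded hSclosed hSbdd
      -- the failure set D = choi '' 𝔼 + PSD cone
      set D : Set (Matrix (Fin n × Fin n) (Fin n × Fin n) ℂ) :=
        {X | ∃ E ∈ 𝔼, (X - choi E).PosSemidef} with hDdef
      have hDconv : Convex ℝ D := by
        rintro X ⟨E1, hE1, hP1⟩ Y ⟨E2, hE2, hP2⟩ a b ha hb hab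
        refine ⟨a • E1 + b • E2, h𝔼cv hE1 hE2 ha hb hab, ?_⟩
        rw [choi_combo]
        have hsplit : a • X + b • Y - (a • choi E1 + b • choi E2)
            = a • (X - choi E1) + b • (Y - choi E2) := by
          rw [smul_sub, smul_sub]
          abel
        rw [hsplit]
        exact (psd_smul_real hP1 ha).add (psd_smul_real hP2 hb)
      have hDclosed : IsClosed D := by
        refine IsSeqClosed.isClosed ?_
        intro x X hx hXlim
        choose Ef hEf hP using hx
        obtain ⟨J, hJS, φ, hφ, hφlim⟩ := hScpt.tendsto_subseq
          (x := fun k => choi (Ef k)) (fun k => ⟨Ef k, hEf k, rfl⟩)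
        have hdiff : Filter.Tendsto (fun t => x (φ t) - choi (Ef (φ t))) Filter.atTop
            (nhds (X - J)) := (hXlim.comp hφ.tendsto_atTop).sub hφlim
        have hpsdXJ : (X - J).PosSemidef := psd_of_tendsto (fun t => hP (φ t)) hdiff
        obtain ⟨E', hE', hJE⟩ := hJS
        refine ⟨E', hE', ?_⟩
        rw [show choi E' = J from hJE]
        exact hpsdXJ
      -- J(F₀) is not in D
      have hnotin : choi F₀ ∉ D := by
        rintro ⟨E, hE, hpsd⟩
        have hlinsub : IsLinearMap ℂ (F₀ - E) := by
          have h1 := (h𝔽 F₀ hF₀).1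
          have h2 := (h𝔼 E hE).1
          constructor
          · intro u v
            show F₀ (u + v) - E (u + v) = (F₀ u - E u) + (F₀ v - E v)
            rw [h1.map_add, h2.map_add]
            abel
          · intro c u
            show F₀ (c • u) - E (c • u) = c • (F₀ u - E u)
            rw [h1.map_smul, h2.map_smul, smul_sub]
        have hcp : (choi (F₀ - E)).PosSemidef := by
          rw [choi_sub]
          exact hpsd
        exact hnc E hE (isCP_of_choi_psd hn hlinsub hcp)
      -- separation
      obtain ⟨f, u, hfu, hD⟩ := geometric_hahn_banach_point_closed hDconv hDclosed hnotin
      have hmemD : ∀ E ∈ 𝔼, choi E ∈ D := by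
        intro E hE
        refine ⟨E, hE, ?_⟩
        rw [sub_self]
        exact Matrix.PosSemidef.zero
      have hfE : ∀ E ∈ 𝔼, u < f (choi E) := fun E hE => hD _ (hmemD E hE)
      have hfpos : ∀ P : Matrix (Fin n × Fin n) (Fin n × Fin n) ℂ, P.PosSemidef → 0 ≤ f P := by
        intro P hP
        by_contra hneg
        push_neg at hneg
        have hE₀D : u < f (choi E₀) := hfE E₀ hE₀
        set t : ℝ := (f (choi E₀) - u + 1) / (-(f P)) with ht
        have htpos : 0 ≤ t := by
          apply div_nonneg <;> linarith
        have hmem : choi E₀ + t • P ∈ D := by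
          refine ⟨E₀, hE₀, ?_⟩
          rw [add_sub_cancel_left]
          exact psd_smul_real hP htpos
        have hval := hD _ hmem
        rw [map_add, ContinuousLinearMap.map_smul, smul_eq_mul] at hval
        have hne' : f P ≠ 0 := ne_of_lt hneg
        have htP : t * f P = -(f (choi E₀) - u + 1) := by
          have hne2 : -f P ≠ 0 := neg_ne_zero.mpr hne'
          rw [ht]
          field_simp [hne2]
        rw [htP] at hval
        linarith
      -- positivity facts about F₀ and u
      have hJF₀ : (choi F₀).PosSemidef := choi_psd_of_cp (h𝔽 F₀ hF₀).1 (h𝔽 F₀ hF₀).2.1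
      have hu0 : 0 < u := lt_of_le_of_lt (hfpos _ hJF₀) hfu
      -- the matrix W
      set W : Matrix (Fin n × Fin n) (Fin n × Fin n) ℂ := Wmat f with hWdef
      have hW : W.PosSemidef := Wmat_psd f hfpos
      set s : ℝ := (W.trace).re with hsdef
      have hWtr : W.trace = ((s : ℝ) : ℂ) :=
        Complex.ext rfl (by rw [psd_trace_im_zero hW, Complex.ofReal_im])
      have hs : 0 < s := by
        have hJ0 := hSprop (choi E₀) ⟨E₀, hE₀, rfl⟩
        have h1 : u < f (choi E₀) := hfE E₀ hE₀
        have h2 : f (choi E₀) = ((W * choi E₀).trace).re :=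
          (Wmat_trace_re f (hJ0.1).1).symm
        have h3 : ((W * choi E₀).trace).re ≤ s * ((choi E₀).trace).re :=
          trace_mul_le_trace_mul hW hJ0.1
        have h4 : s * ((choi E₀).trace).re ≤ s * 1 ∨ 0 < s := by
          rcases le_or_gt s 0 with hs0 | hs0
          · right
            exfalso
            have h5 : 0 ≤ ((choi E₀).trace).re := psd_trace_re_nonneg hJ0.1
            nlinarith [hfpos _ hJ0.1, hu0]
          · right; exact hs0
        rcases h4 with h4 | h4
        · nlinarith [hu0]
        · exact h4
      have husle : u < s := by
        have hJ0 := hSprop (choi E₀) ⟨E₀, hE₀, rfl⟩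
        have h1 : u < f (choi E₀) := hfE E₀ hE₀
        have h2 : f (choi E₀) = ((W * choi E₀).trace).re :=
          (Wmat_trace_re f (hJ0.1).1).symm
        have h3 : ((W * choi E₀).trace).re ≤ s * ((choi E₀).trace).re :=
          trace_mul_le_trace_mul hW hJ0.1
        have h4 : s * ((choi E₀).trace).re ≤ s := by
          have := hJ0.2
          nlinarith [psd_trace_re_nonneg hJ0.1]
        linarith
      -- the effect N
      set σn : (Fin n × Fin n) ≃ (Fin n × Fin n) := Equiv.prodComm (Fin n) (Fin n) with hσn
      set NN : Matrix (Fin n × Fin n) (Fin n × Fin n) ℂ :=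
        ((s⁻¹ : ℝ) • W).submatrix σn σn with hNN
      have hNpsd : NN.PosSemidef := (psd_smul_real hW (inv_nonneg.mpr hs.le)).submatrix σn
      have hNeff : IsEffect NN := by
        refine ⟨hNpsd, ?_⟩
        have key : (1 : Matrix (Fin n × Fin n) (Fin n × Fin n) ℂ) - NN
            = ((1 - (s⁻¹ : ℝ) • W).submatrix σn σn) := by
          ext p q
          simp [hNN, Matrix.submatrix_apply, Matrix.sub_apply, Matrix.one_apply,
            EmbeddingLike.apply_eq_iff_eq]
        have h2 : (1 : Matrix (Fin n × Fin n) (Fin n × Fin n) ℂ) - (s⁻¹ : ℝ) • W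
            = (s⁻¹ : ℝ) • (((s : ℝ)) • (1 : Matrix (Fin n × Fin n) (Fin n × Fin n) ℂ) - W) := by
          rw [smul_sub, smul_smul, inv_mul_cancel₀ hs.ne', one_smul]
        have h3 : (((s : ℝ)) • (1 : Matrix (Fin n × Fin n) (Fin n × Fin n) ℂ) - W).PosSemidef := by
          have h4 := psd_trace_smul_one_sub hW
          rw [hWtr] at h4
          have h5 : ((s : ℝ) : ℂ) • (1 : Matrix (Fin n × Fin n) (Fin n × Fin n) ℂ)
              = (s : ℝ) • (1 : Matrix (Fin n × Fin n) (Fin n × Fin n) ℂ) := by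
            ext p q
            simp [Matrix.smul_apply, Complex.real_smul]
          rwa [h5] at h4
        rw [key, h2]
        exact (psd_smul_real h3 (inv_nonneg.mpr hs.le)).submatrix σn
      -- the value of any CPTN map against (NN, Ω)
      have hval : ∀ G : Matrix (Fin n) (Fin n) ℂ → Matrix (Fin n) (Fin n) ℂ, IsLinearMap ℂ G →
          ((NN * tensorMap G n (omegaMat n)).trace).re = s⁻¹ * ((W * choi G).trace).re := by
        intro G hlin
        rw [tensorMap_omega hlin, hNN, Matrix.submatrix_mul_equiv, trace_submatrix_equiv',
          Matrix.smul_mul, Matrix.trace_smul, Complex.smul_re, smul_eq_mul]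
      -- apply the refinement hypothesis
      have hΘeff : ∀ M ∈ {M | ∃ E ∈ 𝔼, ∃ N ∈ ({NN} : Set (Matrix (Fin n × Fin n) (Fin n × Fin n) ℂ)),
          M = tensorMap (adj E) n N}, IsEffect M := by
        rintro M ⟨E, hE, N, hN, rfl⟩
        rw [Set.mem_singleton_iff] at hN
        subst hN
        exact isEffect_tensorMap_adj (h𝔼 E hE).2.1 (h𝔼 E hE).2.2 (hadj E (Or.inl hE))
          (adj_conjTranspose (hadj E (Or.inl hE)) (cptn_conjTranspose hn (h𝔼 E hE))) hNeff
      have hΨeff : ∀ N ∈ ({NN} : Set (Matrix (Fin n × Fin n) (Fin n × Fin n) ℂ)), IsEffect N := by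
        intro N hN
        rw [Set.mem_singleton_iff] at hN
        subst hN
        exact hNeff
      have hΩ : IsDensity (omegaMat n) := ⟨omega_posSemidef, omega_trace_re_le_one⟩
      have happly := href n _ ({NN} : Set (Matrix (Fin n × Fin n) (Fin n × Fin n) ℂ))
        hΘeff hΨeff (fun ρ _ => le_refl _) (omegaMat n) hΩ
      -- lower bound on the 𝔼-side
      have hvalE : ∀ E ∈ 𝔼,
          ((tensorMap (adj E) n NN * (omegaMat n)).trace).re = s⁻¹ * f (choi E) := by
        intro E hE
        rw [adj_trace_tensor (hadj E (Or.inl hE)), hval E (h𝔼 E hE).1,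
          Wmat_trace_re f (choi_psd_of_cp (h𝔼 E hE).1 (h𝔼 E hE).2.1).1]
      have hvalF : ((tensorMap (adj F₀) n NN * (omegaMat n)).trace).re
          = s⁻¹ * f (choi F₀) := by
        rw [adj_trace_tensor (hadj F₀ (Or.inr hF₀)), hval F₀ (h𝔽 F₀ hF₀).1,
          Wmat_trace_re f hJF₀.1]
      have hlow : s⁻¹ * u ≤ demExp {M | ∃ E ∈ 𝔼, ∃ N ∈ ({NN} : Set (Matrix (Fin n × Fin n) (Fin n × Fin n) ℂ)),
          M = tensorMap (adj E) n N} (omegaMat n) := by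
        refine le_demExp ⟨tensorMap (adj E₀) n NN, ⟨E₀, hE₀, NN, rfl, rfl⟩⟩ ?_
        rintro M ⟨E, hE, N, hN, rfl⟩
        rw [Set.mem_singleton_iff] at hN
        subst hN
        rw [hvalE E hE]
        exact mul_le_mul_of_nonneg_left (hfE E hE).le (inv_nonneg.mpr hs.le)
      have hup : demExp {M | ∃ F ∈ 𝔽, ∃ N ∈ ({NN} : Set (Matrix (Fin n × Fin n) (Fin n × Fin n) ℂ)),
          M = tensorMap (adj F) n N} (omegaMat n) ≤ s⁻¹ * f (choi F₀) := by
        rw [← hvalF]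
        refine demExp_le_of_mem ⟨F₀, hF₀, NN, rfl, rfl⟩ ?_
        rintro M ⟨F, hF, N, hN, rfl⟩
        rw [Set.mem_singleton_iff] at hN
        subst hN
        rw [adj_trace_tensor (hadj F (Or.inr hF))]
        exact trace_mul_psd_re_nonneg hNpsd ((h𝔽 F hF).2.1 n _ omega_posSemidef)
      have hlt : s⁻¹ * f (choi F₀) < s⁻¹ * u :=
        mul_lt_mul_of_pos_left hfu (inv_pos.mpr hs)
      linarith
  · -- Smyth implies refinement
    intro hS m Θ Ψ hΘ hΨ hprem ρ hρ
    refine le_trans (hprem ρ hρ) ?_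
    rcases Set.eq_empty_or_nonempty Ψ with hΨe | ⟨N₀, hN₀⟩
    · subst hΨe
      have h1 : {M | ∃ E ∈ 𝔼, ∃ N ∈ (∅ : Set (Matrix (Fin m × Fin n) (Fin m × Fin n) ℂ)),
          M = tensorMap (adj E) m N} = (∅ : Set (Matrix (Fin m × Fin n) (Fin m × Fin n) ℂ)) := by
        ext M
        simp
      have h2 : {M | ∃ F ∈ 𝔽, ∃ N ∈ (∅ : Set (Matrix (Fin m × Fin n) (Fin m × Fin n) ℂ)),
          M = tensorMap (adj F) m N} = (∅ : Set (Matrix (Fin m × Fin n) (Fin m × Fin n) ℂ)) := by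
        ext M
        simp
      rw [h1, h2]
    · obtain ⟨E₀, hE₀⟩ := h𝔼ne
      obtain ⟨F₁, hF₁⟩ := h𝔽ne
      have hEne : {M | ∃ E ∈ 𝔼, ∃ N ∈ Ψ, M = tensorMap (adj E) m N}.Nonempty :=
        ⟨tensorMap (adj E₀) m N₀, E₀, hE₀, N₀, hN₀, rfl⟩
      have hFne : {M | ∃ F ∈ 𝔽, ∃ N ∈ Ψ, M = tensorMap (adj F) m N}.Nonempty :=
        ⟨tensorMap (adj F₁) m N₀, F₁, hF₁, N₀, hN₀, rfl⟩
      have hE0le : ∀ M ∈ {M | ∃ E ∈ 𝔼, ∃ N ∈ Ψ, M = tensorMap (adj E) m N},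
          0 ≤ ((M * ρ).trace).re := by
        rintro M ⟨E, hE, N, hN, rfl⟩
        rw [adj_trace_tensor (hadj E (Or.inl hE))]
        exact trace_mul_psd_re_nonneg (hΨ N hN).1 ((h𝔼 E hE).2.1 m ρ hρ.1)
      rw [demExp_eq ρ hEne, demExp_eq ρ hFne]
      refine le_csInf (hFne.image _) ?_
      rintro b ⟨M, ⟨F, hF, N, hN, rfl⟩, rfl⟩
      obtain ⟨E, hE, hCP⟩ := hS F hF
      have hbdd : BddBelow ((fun M => ((M * ρ).trace).re) ''
          {M | ∃ E ∈ 𝔼, ∃ N ∈ Ψ, M = tensorMap (adj E) m N}) := by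
        refine ⟨0, ?_⟩
        rintro b ⟨M, hM, rfl⟩
        exact hE0le M hM
      refine le_trans (csInf_le hbdd ⟨tensorMap (adj E) m N, ⟨E, hE, N, hN, rfl⟩, rfl⟩) ?_
      show ((tensorMap (adj E) m N * ρ).trace).re ≤ ((tensorMap (adj F) m N * ρ).trace).re
      rw [adj_trace_tensor (hadj E (Or.inl hE)), adj_trace_tensor (hadj F (Or.inr hF))]
      have h3 : 0 ≤ ((N * (tensorMap F m ρ - tensorMap E m ρ)).trace).re := by
        rw [← tensorMap_sub]
        exact trace_mul_psd_re_nonneg (hΨ N hN).1 (hCP m ρ hρ.1)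
      rw [Matrix.mul_sub, Matrix.trace_sub, Complex.sub_re] at h3
      linarith
end
end
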